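/- arXiv:1604.06755 — 8 statements merged into one kernel-verified Lean document; each statement's English description precedes it below -/
import Mathlib

section
/- Let m be a positive integer and let A = (a_0, a_1, …, a_i) be a finite sequence of positive integers with i ≥ 1, with continuants p_k, q_k. Then A is an m-palindrome (i.e. [A] = m·[Ã]) if and only if m·q_i = p_{i−1}. -/
/-- Value of a finite continued fraction `[a₀, a₁, …, a_i] = a₀ + 1/(a₁ + 1/(⋯ + 1/a_i))`. -/
noncomputable def cfVal : List ℕ → ℝ
  | [] => 0
  | [a] => (a : ℝ)
  | a :: b :: rest => (a : ℝ) + 1 / cfVal (b :: rest)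

/-- `A` is an `m`-palindrome: `[A] = m·[Ã]`, where `Ã` is the reversal of `A`. -/
def IsMPal (m : ℕ) (A : List ℕ) : Prop := cfVal A = (m : ℝ) * cfVal A.reverse

/-- The prefix `(a₀, …, a_i)` of an infinite sequence of partial quotients. -/
def cfPrefix (a : ℕ → ℕ) (i : ℕ) : List ℕ := (List.range (i + 1)).map a

/-- Continuant numerators, index-shifted: `contP a (k+1) = p_k`, `contP a 0 = p₋₁ = 1`. -/
def contP (a : ℕ → ℕ) : ℕ → ℤ
  | 0 => 1
  | 1 => (a 0 : ℤ)
  | (k+2) => (a (k+1) : ℤ) * contP a (k+1) + contP a k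

/-- Continuant denominators, index-shifted: `contQ a (k+1) = q_k`, `contQ a 0 = q₋₁ = 0`. -/
def contQ (a : ℕ → ℕ) : ℕ → ℤ
  | 0 => 0
  | 1 => 1
  | (k+2) => (a (k+1) : ℤ) * contQ a (k+1) + contQ a k

/-- Concatenation of `k` copies of the finite sequence `A`. -/
def listPow (A : List ℕ) (k : ℕ) : List ℕ := (List.replicate k A).flatten

/-- `x` is a quadratic irrational. -/
def IsQuadraticIrrational (x : ℝ) : Prop :=
  Irrational x ∧ ∃ a b c : ℤ, a ≠ 0 ∧ (a : ℝ) * x ^ 2 + (b : ℝ) * x + (c : ℝ) = 0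

/-- `x` is a reduced quadratic irrational: `x > 1` and its algebraic (Galois) conjugate
lies strictly between `-1` and `0`. -/
def IsReducedQuadIrr (x : ℝ) : Prop :=
  Irrational x ∧ 1 < x ∧
    ∃ a b c : ℤ, a ≠ 0 ∧ (a : ℝ) * x ^ 2 + (b : ℝ) * x + (c : ℝ) = 0 ∧
      ∀ y : ℝ, y ≠ x → (a : ℝ) * y ^ 2 + (b : ℝ) * y + (c : ℝ) = 0 → -1 < y ∧ y < 0

/-- `x` and `y` are equivalent: `x = (a + b·y)/(c + d·y)` for integers with `ad - bc = ±1`. -/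
def RealEquiv (x y : ℝ) : Prop :=
  ∃ a b c d : ℤ, (a * d - b * c = 1 ∨ a * d - b * c = -1) ∧
    ((c : ℝ) + (d : ℝ) * y ≠ 0) ∧ x = ((a : ℝ) + (b : ℝ) * y) / ((c : ℝ) + (d : ℝ) * y)

namespace MPalAux

def sh (a : ℕ → ℕ) : ℕ → ℕ := fun k => a (k + 1)

theorem contP_nonneg (a : ℕ → ℕ) : ∀ k, 0 ≤ contP a k
  | 0 => by simp [contP]
  | 1 => by simp [contP]
  | (k+2) => by
      have h1 := contP_nonneg a (k+1)
      have h2 := contP_nonneg a k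
      simp only [contP]
      positivity

theorem contQ_nonneg (a : ℕ → ℕ) : ∀ k, 0 ≤ contQ a k
  | 0 => by simp [contQ]
  | 1 => by simp [contQ]
  | (k+2) => by
      have h1 := contQ_nonneg a (k+1)
      have h2 := contQ_nonneg a k
      simp only [contQ]
      positivity

theorem contP_pos (a : ℕ → ℕ) : ∀ k, (∀ j, j ≤ k → 0 < a j) → 0 < contP a (k+1)
  | 0, h => by simpa [contP] using h 0 le_rfl
  | (k+1), h => by
      have h1 : 0 < contP a (k+1) := contP_pos a k (fun j hj => h j (by omega))
      have h2 := contP_nonneg a k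
      have h3 : (0:ℤ) < (a (k+1) : ℤ) := by exact_mod_cast h (k+1) le_rfl
      show 0 < contP a (k+2)
      simp only [contP]
      nlinarith

theorem contP_pos' (a : ℕ → ℕ) (k : ℕ) (h : ∀ j, j ≤ k → 0 < a j) : 0 < contP a k := by
  cases k with
  | zero => simp [contP]
  | succ k => exact contP_pos a k (fun j hj => h j (by omega))

theorem contQ_pos (a : ℕ → ℕ) : ∀ k, (∀ j, j ≤ k → 0 < a j) → 0 < contQ a (k+1)
  | 0, h => by simp [contQ]
  | (k+1), h => by
      have h1 : 0 < contQ a (k+1) := contQ_pos a k (fun j hj => h j (by omega))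
      have h2 := contQ_nonneg a k
      have h3 : (0:ℤ) < (a (k+1) : ℤ) := by exact_mod_cast h (k+1) le_rfl
      show 0 < contQ a (k+2)
      simp only [contQ]
      nlinarith

theorem contQ_shift (a : ℕ → ℕ) : ∀ k, contQ a (k+1) = contP (sh a) k
  | 0 => by simp [contQ, contP]
  | 1 => by simp [contQ, contP, sh]
  | (k+2) => by
      have h1 := contQ_shift a (k+1)
      have h2 := contQ_shift a k
      show contQ a (k+3) = contP (sh a) (k+2)
      simp only [contQ, contP, sh] at *
      rw [h1, h2]

theorem contP_shift (a : ℕ → ℕ) :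
    ∀ k, contP a (k+1) = (a 0 : ℤ) * contP (sh a) k + contQ (sh a) k
  | 0 => by simp [contP, contQ]
  | 1 => by simp [contP, contQ, sh]; ring
  | (k+2) => by
      have h1 := contP_shift a (k+1)
      have h2 := contP_shift a k
      show contP a (k+3) = _
      simp only [contP, contQ, sh] at *
      rw [h1, h2]
      ring

theorem cfPrefix_cons (a : ℕ → ℕ) (i : ℕ) :
    cfPrefix a (i+1) = a 0 :: cfPrefix (sh a) i := by
  simp [cfPrefix, List.range_succ_eq_map, sh, Function.comp]

theorem cfPrefix_ne_nil (a : ℕ → ℕ) (i : ℕ) : cfPrefix a i ≠ [] := by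
  simp [cfPrefix, List.range_succ]

theorem cfVal_cons (x : ℕ) (L : List ℕ) (hL : L ≠ []) :
    cfVal (x :: L) = (x : ℝ) + 1 / cfVal L := by
  cases L with
  | nil => exact absurd rfl hL
  | cons b rest => rfl

theorem cfVal_cfPrefix : ∀ (i : ℕ) (a : ℕ → ℕ), (∀ k, k ≤ i → 0 < a k) →
    cfVal (cfPrefix a i) = (contP a (i+1) : ℝ) / (contQ a (i+1) : ℝ)
  | 0, a, ha => by simp [cfPrefix, cfVal, contP, contQ]
  | (i+1), a, ha => by
      rw [cfPrefix_cons, cfVal_cons _ _ (cfPrefix_ne_nil _ _),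
        cfVal_cfPrefix i (sh a) (fun k hk => ha (k+1) (by omega))]
      have hp : 0 < contP (sh a) (i+1) :=
        contP_pos (sh a) i (fun j hj => ha (j+1) (by omega))
      have hq : 0 < contQ (sh a) (i+1) :=
        contQ_pos (sh a) i (fun j hj => ha (j+1) (by omega))
      have hp' : ((contP (sh a) (i+1) : ℝ)) ≠ 0 := by exact_mod_cast hp.ne'
      have hq' : ((contQ (sh a) (i+1) : ℝ)) ≠ 0 := by exact_mod_cast hq.ne'
      rw [contP_shift a (i+1), contQ_shift a (i+1)]
      push_cast
      field_simp

theorem cfPrefix_reverse_succ (a : ℕ → ℕ) (i : ℕ) :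
    (cfPrefix a (i+1)).reverse = a (i+1) :: (cfPrefix a i).reverse := by
  simp [cfPrefix, List.range_succ]

theorem cfVal_cfPrefix_reverse (a : ℕ → ℕ) :
    ∀ i, (∀ k, k ≤ i → 0 < a k) →
    cfVal ((cfPrefix a i).reverse) = (contP a (i+1) : ℝ) / (contP a i : ℝ)
  | 0, ha => by simp [cfPrefix, cfVal, contP]
  | (i+1), ha => by
      have hrev := cfPrefix_reverse_succ a i
      rw [hrev, cfVal_cons _ _ (by simp [cfPrefix_ne_nil]),
        cfVal_cfPrefix_reverse a i (fun k hk => ha k (by omega))]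
      have hp1 : 0 < contP a (i+1) := contP_pos a i (fun j hj => ha j (by omega))
      have hp0 : 0 < contP a i := contP_pos' a i (fun j hj => ha j (by omega))
      have hp1' : ((contP a (i+1) : ℝ)) ≠ 0 := by exact_mod_cast hp1.ne'
      have hp0' : ((contP a i : ℝ)) ≠ 0 := by exact_mod_cast hp0.ne'
      show (a (i+1) : ℝ) + 1 / _ = (contP a (i+2) : ℝ) / _
      simp only [contP]
      push_cast
      field_simp

end MPalAux

theorem m_palindrome_iff_continuant
    (m : ℕ) (hm : 0 < m) (a : ℕ → ℕ) (i : ℕ) (hi : 1 ≤ i)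
    (ha : ∀ k, k ≤ i → 0 < a k) :
    IsMPal m (cfPrefix a i) ↔ (m : ℤ) * contQ a (i + 1) = contP a i := by
  have hp1 : 0 < contP a (i+1) := MPalAux.contP_pos a i ha
  have hp0 : 0 < contP a i := MPalAux.contP_pos' a i ha
  have hq : 0 < contQ a (i+1) := MPalAux.contQ_pos a i ha
  have hp1' : ((contP a (i+1) : ℝ)) ≠ 0 := by exact_mod_cast hp1.ne'
  have hp0' : ((contP a i : ℝ)) ≠ 0 := by exact_mod_cast hp0.ne'
  have hq' : ((contQ a (i+1) : ℝ)) ≠ 0 := by exact_mod_cast hq.ne'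
  rw [IsMPal, MPalAux.cfVal_cfPrefix i a ha, MPalAux.cfVal_cfPrefix_reverse a i ha]
  rw [mul_div_assoc', div_eq_div_iff hq' hp0']
  constructor
  · intro h
    have h2 : (contP a (i+1):ℝ) * (contP a i : ℝ) =
        (contP a (i+1):ℝ) * ((m:ℝ) * (contQ a (i+1):ℝ)) := by rw [h]; ring
    have h3 := mul_left_cancel₀ hp1' h2
    exact_mod_cast h3.symm
  · intro h
    have h' : ((m:ℝ)) * (contQ a (i+1):ℝ) = (contP a i : ℝ) := by exact_mod_cast h
    rw [← h']
    ring
end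

section
/- Let m be a positive integer and let A = (a_0, …, a_i) and B = (b_0, …, b_j) be finite sequences of positive integers with i ≥ 1 and j ≥ 1, satisfying m·[Ã] = [B]. Then the concatenation BA is an m-palindrome if and only if m·[a_i, …, a_1] = [b_0, …, b_{j−1}]. -/
namespace CFAux

/-- Continuant of a list. -/
def cK : List ℕ → ℕ
  | [] => 1
  | [a] => a
  | a :: b :: l => a * cK (b :: l) + cK l

/-- Shifted continuant: `cKm L = cK L.dropLast`, except `cKm [] = 0`. -/
def cKm : List ℕ → ℕ
  | [] => 0
  | a :: l => cK (a :: l).dropLast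

lemma cK_cons (c : ℕ) (L : List ℕ) (h : L ≠ []) :
    cK (c :: L) = c * cK L + cK L.tail := by
  cases L with
  | nil => exact absurd rfl h
  | cons b l => rfl

lemma cK_pos : ∀ L : List ℕ, (∀ x ∈ L, 0 < x) → 0 < cK L := by
  intro L
  induction L using cK.induct with
  | case1 => intro _; simp [cK]
  | case2 c => intro h; simpa [cK] using h c (by simp)
  | case3 c d l ih1 ih2 =>
    intro h
    have h1 : 0 < cK (d :: l) := ih1 (fun x hx => h x (List.mem_cons_of_mem _ hx))
    have h2 : 0 < c := h c (by simp)
    simp only [cK]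
    positivity

lemma tail_dropLast (L : List ℕ) : L.dropLast.tail = L.tail.dropLast := by
  cases L with
  | nil => rfl
  | cons c l =>
    cases l with
    | nil => rfl
    | cons d l' => simp

lemma dropLast_reverse (L : List ℕ) : L.reverse.dropLast = L.tail.reverse := by
  have := List.tail_reverse (l := L.reverse)
  rw [List.reverse_reverse] at this
  rw [← List.reverse_reverse (L.reverse.dropLast), ← this]

lemma cKm_eq (L : List ℕ) (h : L ≠ []) : cKm L = cK L.dropLast := by
  cases L with
  | nil => exact absurd rfl h
  | cons c l => rfl

lemma cKm_cons (c : ℕ) (L : List ℕ) (h : L ≠ []) :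
    cKm (c :: L) = c * cKm L + cKm L.tail := by
  cases L with
  | nil => exact absurd rfl h
  | cons d l =>
    cases l with
    | nil => simp [cKm, cK]
    | cons e l' =>
      simp only [cKm, List.dropLast_cons₂, List.tail_cons]
      rw [cK_cons]
      · rfl
      · simp

lemma cK_concat : ∀ (L : List ℕ) (c : ℕ), L ≠ [] →
    cK (L ++ [c]) = c * cK L + cK L.dropLast := by
  intro L
  induction L using cK.induct with
  | case1 => intro c h; exact absurd rfl h
  | case2 d => intro c _; simp [cK]; ring
  | case3 d e l ih1 ih2 =>
    intro c _
    cases l with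
    | nil => simp [cK]; ring
    | cons f l' =>
      have h1 := ih1 c (by simp)
      have h2 := ih2 c (by simp)
      show cK (d :: (e :: f :: l' ++ [c])) = _
      rw [cK_cons d _ (by simp)]
      have ht : (e :: f :: l' ++ [c]).tail = f :: l' ++ [c] := rfl
      rw [ht, show (e :: f :: l' ++ [c]) = (e :: f :: l') ++ [c] from rfl, h1, h2]
      rw [cK_cons d (e :: f :: l') (by simp), List.tail_cons]
      rw [show (d :: e :: f :: l').dropLast = d :: ((e :: f :: l').dropLast) from rfl]
      rw [cK_cons d ((e :: f :: l').dropLast) (by simp [List.dropLast_cons₂]),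
        tail_dropLast, List.tail_cons]
      ring

lemma cK_reverse : ∀ (L : List ℕ), cK L.reverse = cK L := by
  have key : ∀ (n : ℕ) (L : List ℕ), L.length ≤ n → cK L.reverse = cK L := by
    intro n
    induction n with
    | zero => intro L hL; rw [List.length_eq_zero_iff.1 (Nat.le_zero.1 hL)]; rfl
    | succ n ih =>
      intro L hL
      cases L with
      | nil => rfl
      | cons c M =>
        cases M with
        | nil => rfl
        | cons d l =>
          have hM : (d :: l).reverse ≠ [] := by simp
          rw [show (c :: d :: l).reverse = (d :: l).reverse ++ [c] by simp,
            cK_concat _ c hM, dropLast_reverse,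
            ih (d :: l) (by simpa using hL), List.tail_cons,
            ih l (by simp at hL; omega)]
          rw [cK_cons c (d :: l) (by simp), List.tail_cons]
  intro L; exact key L.length L le_rfl

lemma cfVal_cons (c : ℕ) (L : List ℕ) (h : L ≠ []) :
    cfVal (c :: L) = (c : ℝ) + 1 / cfVal L := by
  cases L with
  | nil => exact absurd rfl h
  | cons d l => rfl

lemma one_le_cfVal : ∀ L : List ℕ, L ≠ [] → (∀ x ∈ L, 0 < x) → 1 ≤ cfVal L := by
  intro L
  induction L with
  | nil => intro h; exact absurd rfl h
  | cons c M ih =>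
    intro _ hpos
    have hc : (1:ℝ) ≤ c := by
      have := hpos c (by simp); exact_mod_cast this
    cases M with
    | nil => simpa [cfVal] using hc
    | cons d l =>
      have hM : 1 ≤ cfVal (d :: l) := ih (by simp) (fun x hx => hpos x (List.mem_cons_of_mem _ hx))
      rw [cfVal_cons c _ (by simp)]
      have : 0 ≤ 1 / cfVal (d :: l) := by positivity
      linarith

lemma cfVal_eq : ∀ L : List ℕ, L ≠ [] → (∀ x ∈ L, 0 < x) →
    cfVal L = (cK L : ℝ) / (cK L.tail : ℝ) := by
  intro L
  induction L with
  | nil => intro h; exact absurd rfl h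
  | cons c M ih =>
    intro _ hpos
    cases M with
    | nil => simp [cfVal, cK]
    | cons d l =>
      have hposM : ∀ x ∈ d :: l, 0 < x := fun x hx => hpos x (List.mem_cons_of_mem _ hx)
      have hM := ih (by simp) hposM
      have h1 : (0:ℝ) < cK (d :: l) := by exact_mod_cast cK_pos _ hposM
      have h2 : (0:ℝ) < cK (d :: l).tail := by
        exact_mod_cast cK_pos _ (fun x hx => hposM x (List.tail_subset _ hx))
      rw [cfVal_cons c _ (by simp), hM, cK_cons c (d :: l) (by simp), List.tail_cons, List.tail_cons]
      push_cast
      field_simp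

lemma cfVal_append : ∀ (B A : List ℕ), B ≠ [] → A ≠ [] →
    (∀ x ∈ B, 0 < x) → (∀ x ∈ A, 0 < x) →
    cfVal (B ++ A) = ((cK B : ℝ) * cfVal A + (cKm B : ℝ)) /
      ((cK B.tail : ℝ) * cfVal A + (cKm B.tail : ℝ)) := by
  intro B
  induction B with
  | nil => intro A h; exact absurd rfl h
  | cons c C ih =>
    intro A _ hApos hBpos hA2
    have hx : 1 ≤ cfVal A := one_le_cfVal A hApos hA2
    cases C with
    | nil =>
      simp only [List.singleton_append, cKm, cK, List.tail_cons, List.dropLast_singleton]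
      rw [cfVal_cons c A hApos]
      have : cfVal A ≠ 0 := by linarith
      simp [cK, cKm]
      field_simp
    | cons d l =>
      have hCpos : ∀ x ∈ d :: l, 0 < x := fun x hx => hBpos x (List.mem_cons_of_mem _ hx)
      have hIH := ih A (by simp) hApos hCpos hA2
      have hKC : (0:ℝ) < cK (d :: l) := by exact_mod_cast cK_pos _ hCpos
      have hKmC : (0:ℝ) ≤ cKm (d :: l) := by positivity
      have hden : (0:ℝ) < (cK (d :: l) : ℝ) * cfVal A + (cKm (d :: l) : ℝ) := by nlinarith
      have hKCt : (0:ℝ) < cK (d :: l).tail := by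
        exact_mod_cast cK_pos _ (fun x hx => hCpos x (List.tail_subset _ hx))
      have hKmCt : (0:ℝ) ≤ cKm (d :: l).tail := by positivity
      have hden2 : (0:ℝ) < (cK (d :: l).tail : ℝ) * cfVal A + (cKm (d :: l).tail : ℝ) := by
        nlinarith
      have hval : 0 < cfVal ((d :: l) ++ A) := by rw [hIH]; positivity
      rw [show (c :: d :: l) ++ A = c :: ((d :: l) ++ A) from rfl,
        cfVal_cons c _ (by simp), hIH,
        cK_cons c (d :: l) (by simp), cKm_cons c (d :: l) (by simp), List.tail_cons, List.tail_cons]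
      push_cast
      rw [one_div_div]
      field_simp
      ring

lemma mem_map_range_pos {f : ℕ → ℕ} {n : ℕ} (hf : ∀ k, k < n → 0 < f k) :
    ∀ x ∈ (List.range n).map f, 0 < x := by
  intro x hx
  simp only [List.mem_map, List.mem_range] at hx
  obtain ⟨k, hk, rfl⟩ := hx
  exact hf k hk

lemma tail_map_range (f : ℕ → ℕ) (n : ℕ) :
    ((List.range (n + 1)).map f).tail = (List.range n).map (fun k => f (k + 1)) := by
  rw [List.range_succ_eq_map]
  simp [Function.comp]

lemma dropLast_map_range (f : ℕ → ℕ) (n : ℕ) :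
    ((List.range (n + 1)).map f).dropLast = (List.range n).map f := by
  rw [List.range_succ]
  simp

lemma tail_rev_map_range (f : ℕ → ℕ) (n : ℕ) :
    ((List.range (n + 1)).map f).tail.reverse = (List.range n).map (fun k => f (n - k)) := by
  rw [tail_map_range]
  apply List.ext_getElem
  · simp
  · intro k h1 h2
    simp only [List.length_reverse, List.length_map, List.length_range] at h1 h2
    rw [List.getElem_reverse, List.getElem_map, List.getElem_map,
      List.getElem_range, List.getElem_range]
    congr 1
    simp only [List.length_map, List.length_range]
    omega

lemma key (m pa qa pa' qa' p q p' q' : ℝ)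
    (hpa : 0 < pa) (hqa : 0 < qa) (hpa' : 0 < pa') (hqa' : 0 < qa')
    (hp : 0 < p) (hq : 0 < q) (hp' : 0 < p') (hq' : 0 < q')
    (hE : m * (pa / pa') = p / q) :
    (p * (pa/qa) + p') / (q * (pa/qa) + q')
        = m * ((pa * (p/p') + qa) / (pa' * (p/p') + qa'))
      ↔ m * (qa/qa') = p'/q' := by
  have hE0 : m * pa * q = p * pa' := by
    rw [← mul_div_assoc, div_eq_div_iff hpa'.ne' hq.ne'] at hE; exact hE
  have hD2 : 0 < q * (pa/qa) + q' := by positivity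
  have hD1 : 0 < pa' * (p/p') + qa' := by positivity
  have hN : 0 < p*pa + p'*qa := by positivity
  rw [← mul_div_assoc m, div_eq_div_iff hD2.ne' hD1.ne',
    ← mul_div_assoc m qa, div_eq_div_iff hqa'.ne' hq'.ne']
  constructor
  · intro h
    have h2 : ((p*pa + p'*qa) * (p'*qa)) * (pa'*p + qa'*p')
        = ((p*pa + p'*qa) * (p'*qa)) * (m*(q*pa + q'*qa)) := by
      have hqa0 := hqa.ne'
      have hp'0 := hp'.ne'
      field_simp at h
      linear_combination ((p*pa + p'*qa) * (p'*qa)) * h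
    have hNN : (p*pa + p'*qa) * (p'*qa) ≠ 0 := by positivity
    have h3 := mul_left_cancel₀ hNN h2
    linear_combination -hE0 - h3
  · intro h
    have hqa0 := hqa.ne'
    have hp'0 := hp'.ne'
    field_simp
    linear_combination -hE0 - h

end CFAux

open CFAux in
theorem concatenation_m_palindrome_iff
    (m : ℕ) (hm : 0 < m)
    (a : ℕ → ℕ) (i : ℕ) (hi : 1 ≤ i) (ha : ∀ k, k ≤ i → 0 < a k)
    (b : ℕ → ℕ) (j : ℕ) (hj : 1 ≤ j) (hb : ∀ k, k ≤ j → 0 < b k)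
    (hAB : (m : ℝ) * cfVal (cfPrefix a i).reverse = cfVal (cfPrefix b j)) :
    IsMPal m (cfPrefix b j ++ cfPrefix a i) ↔
      (m : ℝ) * cfVal ((List.range i).map (fun k => a (i - k))) =
        cfVal ((List.range j).map b) := by
  set A := cfPrefix a i with hAdef
  set B := cfPrefix b j with hBdef
  -- positivity of entries
  have hApos : ∀ x ∈ A, 0 < x :=
    mem_map_range_pos (f := a) (n := i + 1) (fun k hk => ha k (by omega))
  have hBpos : ∀ x ∈ B, 0 < x :=
    mem_map_range_pos (f := b) (n := j + 1) (fun k hk => hb k (by omega))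
  have hAt : ∀ x ∈ A.tail, 0 < x := fun x hx => hApos x (List.tail_subset _ hx)
  have hAd : ∀ x ∈ A.dropLast, 0 < x := fun x hx => hApos x (List.dropLast_subset _ hx)
  have hAtd : ∀ x ∈ A.tail.dropLast, 0 < x := fun x hx => hAt x (List.dropLast_subset _ hx)
  have hBt : ∀ x ∈ B.tail, 0 < x := fun x hx => hBpos x (List.tail_subset _ hx)
  have hBd : ∀ x ∈ B.dropLast, 0 < x := fun x hx => hBpos x (List.dropLast_subset _ hx)
  have hBtd : ∀ x ∈ B.tail.dropLast, 0 < x := fun x hx => hBt x (List.dropLast_subset _ hx)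
  -- nonemptiness
  have hAlen : A.length = i + 1 := by simp [hAdef, cfPrefix]
  have hBlen : B.length = j + 1 := by simp [hBdef, cfPrefix]
  have hAne : A ≠ [] := by
    intro h; rw [h] at hAlen; simp at hAlen
  have hBne : B ≠ [] := by
    intro h; rw [h] at hBlen; simp at hBlen
  have hAtne : A.tail ≠ [] := by
    intro h
    have := congrArg List.length h
    simp [hAlen] at this; omega
  have hBtne : B.tail ≠ [] := by
    intro h
    have := congrArg List.length h
    simp [hBlen] at this; omega
  have hAdne : A.dropLast ≠ [] := by
    intro h
    have := congrArg List.length h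
    simp [hAlen] at this; omega
  have hBdne : B.dropLast ≠ [] := by
    intro h
    have := congrArg List.length h
    simp [hBlen] at this; omega
  -- positivity of continuants (as reals)
  have h_pA : (0:ℝ) < cK A := by exact_mod_cast cK_pos A hApos
  have h_qA : (0:ℝ) < cK A.tail := by exact_mod_cast cK_pos _ hAt
  have h_pA' : (0:ℝ) < cK A.dropLast := by exact_mod_cast cK_pos _ hAd
  have h_qA' : (0:ℝ) < cK A.tail.dropLast := by exact_mod_cast cK_pos _ hAtd
  have h_P : (0:ℝ) < cK B := by exact_mod_cast cK_pos B hBpos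
  have h_Q : (0:ℝ) < cK B.tail := by exact_mod_cast cK_pos _ hBt
  have h_P' : (0:ℝ) < cK B.dropLast := by exact_mod_cast cK_pos _ hBd
  have h_Q' : (0:ℝ) < cK B.tail.dropLast := by exact_mod_cast cK_pos _ hBtd
  -- continued fraction values
  have e_x : cfVal A = (cK A : ℝ) / (cK A.tail : ℝ) := cfVal_eq A hAne hApos
  have e_Arev : cfVal A.reverse = (cK A : ℝ) / (cK A.dropLast : ℝ) := by
    rw [cfVal_eq A.reverse (by simp [hAne]) (fun x hx => hApos x (List.mem_reverse.1 hx)),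
      cK_reverse, List.tail_reverse, cK_reverse]
  have e_B : cfVal B = (cK B : ℝ) / (cK B.tail : ℝ) := cfVal_eq B hBne hBpos
  have e_Brev : cfVal B.reverse = (cK B : ℝ) / (cK B.dropLast : ℝ) := by
    rw [cfVal_eq B.reverse (by simp [hBne]) (fun x hx => hBpos x (List.mem_reverse.1 hx)),
      cK_reverse, List.tail_reverse, cK_reverse]
  rw [e_Arev, e_B] at hAB
  -- rewrite the goal lists
  have e_goal1 : (List.range i).map (fun k => a (i - k)) = A.tail.reverse :=
    (tail_rev_map_range a i).symm
  have e_goal2 : (List.range j).map b = B.dropLast :=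
    (dropLast_map_range b j).symm
  have e_R1 : cfVal (A.tail.reverse) = (cK A.tail : ℝ) / (cK A.tail.dropLast : ℝ) := by
    rw [cfVal_eq _ (by simp [hAtne]) (fun x hx => hAt x (List.mem_reverse.1 hx)),
      cK_reverse, List.tail_reverse, cK_reverse]
  have e_R2 : cfVal B.dropLast = (cK B.dropLast : ℝ) / (cK B.tail.dropLast : ℝ) := by
    rw [cfVal_eq _ hBdne hBd, tail_dropLast]
  have e_L : cfVal (B ++ A)
      = ((cK B : ℝ) * ((cK A : ℝ)/(cK A.tail : ℝ)) + (cK B.dropLast : ℝ)) /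
        ((cK B.tail : ℝ) * ((cK A : ℝ)/(cK A.tail : ℝ)) + (cK B.tail.dropLast : ℝ)) := by
    rw [cfVal_append B A hBne hAne hBpos hApos, e_x, cKm_eq B hBne, cKm_eq B.tail hBtne]
  have e_Rv : cfVal ((B ++ A).reverse)
      = ((cK A : ℝ) * ((cK B : ℝ)/(cK B.dropLast : ℝ)) + (cK A.tail : ℝ)) /
        ((cK A.dropLast : ℝ) * ((cK B : ℝ)/(cK B.dropLast : ℝ)) + (cK A.tail.dropLast : ℝ)) := by
    rw [List.reverse_append,
      cfVal_append A.reverse B.reverse (by simp [hAne]) (by simp [hBne])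
        (fun x hx => hApos x (List.mem_reverse.1 hx))
        (fun x hx => hBpos x (List.mem_reverse.1 hx)),
      e_Brev, cK_reverse, cKm_eq A.reverse (by simp [hAne]), dropLast_reverse, cK_reverse,
      List.tail_reverse, cK_reverse, cKm_eq (A.dropLast.reverse) (by simp [hAdne]),
      dropLast_reverse, cK_reverse, tail_dropLast]
  rw [IsMPal, e_L, e_Rv, e_goal1, e_goal2, e_R1, e_R2]
  exact key (m : ℝ) (cK A : ℝ) (cK A.tail : ℝ) (cK A.dropLast : ℝ) (cK A.tail.dropLast : ℝ)
    (cK B : ℝ) (cK B.tail : ℝ) (cK B.dropLast : ℝ) (cK B.tail.dropLast : ℝ)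
    h_pA h_qA h_pA' h_qA' h_P h_Q h_P' h_Q' hAB
end

section
/- Let m be a positive integer and let A be a finite sequence of positive integers. If A is an m-palindrome, then the concatenation A² = AA is an m-palindrome. -/
/-- list continuant -/
def contK : List ℕ → ℤ
  | [] => 1
  | [a] => (a : ℤ)
  | a :: b :: rest => (a : ℤ) * contK (b :: rest) + contK rest

@[simp] lemma contK_nil : contK [] = 1 := rfl
@[simp] lemma contK_single (a : ℕ) : contK [a] = (a : ℤ) := rfl
lemma contK_cons_cons (a b : ℕ) (l : List ℕ) :
    contK (a :: b :: l) = (a : ℤ) * contK (b :: l) + contK l := rfl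

lemma contK_pos : ∀ (l : List ℕ), (∀ x ∈ l, 0 < x) → 0 < contK l
  | [], _ => by simp
  | [a], h => by simpa using h a (by simp)
  | a :: b :: rest, h => by
    rw [contK_cons_cons]
    have h1 : 0 < contK (b :: rest) := contK_pos (b :: rest) (fun x hx => h x (by simp [hx]))
    have h2 : 0 < contK rest := contK_pos rest (fun x hx => h x (by simp [hx]))
    have ha : 0 < a := h a (by simp)
    have : (1 : ℤ) ≤ (a : ℤ) := by exact_mod_cast ha
    nlinarith

lemma cfVal_eq_contK : ∀ (l : List ℕ), l ≠ [] → (∀ x ∈ l, 0 < x) →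
    cfVal l = (contK l : ℝ) / (contK l.tail : ℝ)
  | [], h, _ => absurd rfl h
  | [a], _, h => by simp [cfVal]
  | a :: b :: rest, _, h => by
    have h1 : cfVal (b :: rest) = (contK (b :: rest) : ℝ) / (contK rest : ℝ) :=
      cfVal_eq_contK (b :: rest) (by simp) (fun x hx => h x (by simp [hx]))
    have hk1 : 0 < contK (b :: rest) := contK_pos _ (fun x hx => h x (by simp [hx]))
    have hk2 : 0 < contK rest := contK_pos _ (fun x hx => h x (by simp [hx]))
    have hk1' : (contK (b :: rest) : ℝ) ≠ 0 := by exact_mod_cast hk1.ne'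
    have hk2' : (contK rest : ℝ) ≠ 0 := by exact_mod_cast hk2.ne'
    simp only [cfVal, h1, contK_cons_cons, List.tail_cons]
    push_cast
    field_simp
    try ring

/-- Euler's continuant concatenation identity. -/
lemma contK_append : ∀ (A B : List ℕ), A ≠ [] → B ≠ [] →
    contK (A ++ B) = contK A * contK B + contK A.dropLast * contK B.tail
  | [], _, hA, _ => absurd rfl hA
  | [a], b :: B', _, _ => by
    simp [contK_cons_cons]
  | [a, c], b :: B', _, _ => by
    have h1 : contK ([c] ++ (b :: B')) = contK [c] * contK (b :: B') +
        contK ([c].dropLast) * contK (b :: B').tail :=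
      contK_append [c] (b :: B') (by simp) (by simp)
    simp only [List.cons_append, List.nil_append] at h1 ⊢
    rw [contK_cons_cons, h1]
    simp [contK_cons_cons]
    try ring
  | a :: c :: d :: A', b :: B', _, _ => by
    have h1 := contK_append (c :: d :: A') (b :: B') (by simp) (by simp)
    have h2 := contK_append (d :: A') (b :: B') (by simp) (by simp)
    simp only [List.cons_append] at h1 h2 ⊢
    rw [contK_cons_cons, h1, h2]
    have e1 : contK (a :: c :: d :: A') =
        (a : ℤ) * contK (c :: d :: A') + contK (d :: A') := rfl
    have e2 : contK ((a :: c :: d :: A').dropLast) =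
        (a : ℤ) * contK ((c :: d :: A').dropLast) + contK ((d :: A').dropLast) := by
      show contK (a :: c :: (d :: A').dropLast) = _
      rw [show (c :: d :: A').dropLast = c :: (d :: A').dropLast from rfl]
      exact contK_cons_cons a c _
    rw [e1, e2]
    ring
termination_by A B => A.length

lemma dropLast_reverse (l : List ℕ) : l.reverse.dropLast = l.tail.reverse := by
  rcases l with _ | ⟨a, t⟩
  · simp
  · simp [List.reverse_cons, List.dropLast_concat]

lemma contK_reverse : ∀ (l : List ℕ), contK l.reverse = contK l
  | [] => rfl
  | [a] => rfl
  | a :: b :: rest => by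
    have h1 : contK ((b :: rest).reverse) = contK (b :: rest) := contK_reverse (b :: rest)
    have h2 : contK rest.reverse = contK rest := contK_reverse rest
    have key := contK_append ((b :: rest).reverse) [a] (by simp) (by simp)
    rw [List.reverse_cons, key, h1, dropLast_reverse, List.tail_cons, h2, contK_cons_cons]
    simp
    ring
termination_by l => l.length

theorem m_palindrome_square
    (m : ℕ) (hm : 0 < m) (A : List ℕ) (hA : ∀ x ∈ A, 0 < x)
    (h : IsMPal m A) : IsMPal m (A ++ A) := by
  unfold IsMPal at h ⊢
  rcases A with _ | ⟨a, t⟩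
  · simp [cfVal]
  rcases t with _ | ⟨b, t'⟩
  · -- A = [a]
    have ha : 0 < a := hA a (by simp)
    have ha' : (0:ℝ) < (a:ℝ) := by exact_mod_cast ha
    simp only [cfVal, List.reverse_singleton] at h
    have hm1 : (m : ℝ) = 1 := by
      have h' : ((m:ℝ) - 1) * a = 0 := by linarith
      rcases mul_eq_zero.1 h' with h'' | h''
      · linarith
      · exact absurd h'' ha'.ne'
    rw [show ([a] ++ [a] : List ℕ) = [a, a] from rfl,
        show ([a, a] : List ℕ).reverse = [a, a] from rfl, hm1, one_mul]
  -- A = a :: b :: t', length ≥ 2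
  set A : List ℕ := a :: b :: t' with hAdef
  have hApos : ∀ x ∈ A, 0 < x := hA
  have hAne : A ≠ [] := by simp [hAdef]
  have hTne : A.tail ≠ [] := by simp [hAdef]
  have hRne : A.reverse ≠ [] := by simp [hAdef]
  have hRTne : A.reverse.tail ≠ [] := by
    rw [List.tail_reverse]
    simp [hAdef]
  set p := contK A with hp
  set q := contK A.tail with hq
  set p' := contK A.dropLast with hp'
  set q' := contK A.tail.dropLast with hq'
  have memtail : ∀ x ∈ A.tail, 0 < x := fun x hx => hApos x (List.mem_of_mem_tail hx)
  have memdl : ∀ x ∈ A.dropLast, 0 < x := fun x hx => hApos x (List.mem_of_mem_dropLast hx)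
  have memtdl : ∀ x ∈ A.tail.dropLast, 0 < x :=
    fun x hx => memtail x (List.mem_of_mem_dropLast hx)
  have memrev : ∀ x ∈ A.reverse, 0 < x := fun x hx => hApos x (List.mem_reverse.1 hx)
  have memAA : ∀ x ∈ A ++ A, 0 < x := by
    intro x hx; rcases List.mem_append.1 hx with hx | hx <;> exact hApos x hx
  have memRR : ∀ x ∈ A.reverse ++ A.reverse, 0 < x := by
    intro x hx; rcases List.mem_append.1 hx with hx | hx <;> exact memrev x hx
  have hp0 : 0 < p := contK_pos A hApos
  have hq0 : 0 < q := contK_pos _ memtail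
  have hp'0 : 0 < p' := contK_pos _ memdl
  have hq'0 : 0 < q' := contK_pos _ memtdl
  -- reversal continuant facts
  have hrev : contK A.reverse = p := contK_reverse A
  have hrevtail : contK A.reverse.tail = p' := by
    rw [List.tail_reverse, contK_reverse]
  have hrevdl : contK A.reverse.dropLast = q := by
    rw [dropLast_reverse, contK_reverse]
  have hrevtdl : contK A.reverse.tail.dropLast = q' := by
    rw [List.tail_reverse, dropLast_reverse, contK_reverse]
    rfl
  -- values
  have hAv : cfVal A = (p : ℝ) / (q : ℝ) := cfVal_eq_contK A hAne hApos
  have hRv : cfVal A.reverse = (p : ℝ) / (p' : ℝ) := by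
    rw [cfVal_eq_contK A.reverse hRne memrev, hrev, hrevtail]
  -- key relation p' = m q
  have hp0' : (0:ℝ) < (p:ℝ) := by exact_mod_cast hp0
  have hq0' : (0:ℝ) < (q:ℝ) := by exact_mod_cast hq0
  have hp'0' : (0:ℝ) < (p':ℝ) := by exact_mod_cast hp'0
  have hq'0' : (0:ℝ) < (q':ℝ) := by exact_mod_cast hq'0
  have key : (p' : ℝ) = (m : ℝ) * (q : ℝ) := by
    rw [hAv, hRv] at h
    field_simp at h
    exact h.trans (by ring)
  -- continuants of concatenations
  have hAA : contK (A ++ A) = p * p + p' * q := by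
    rw [contK_append A A hAne hAne]
  have hAAt : (A ++ A).tail = A.tail ++ A := List.tail_append_of_ne_nil hAne
  have hAAtc : contK ((A ++ A).tail) = q * p + q' * q := by
    rw [hAAt, contK_append A.tail A hTne hAne]
  have hRR : contK (A.reverse ++ A.reverse) = p * p + q * p' := by
    rw [contK_append A.reverse A.reverse hRne hRne, hrev, hrevdl, hrevtail]
  have hRRt : (A.reverse ++ A.reverse).tail = A.reverse.tail ++ A.reverse :=
    List.tail_append_of_ne_nil hRne
  have hRRtc : contK ((A.reverse ++ A.reverse).tail) = p' * p + q' * p' := by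
    rw [hRRt, contK_append A.reverse.tail A.reverse hRTne hRne, hrevtail, hrev, hrevtdl]
  have hAAv : cfVal (A ++ A) = ((p * p + p' * q : ℤ) : ℝ) / ((q * p + q' * q : ℤ) : ℝ) := by
    rw [cfVal_eq_contK (A ++ A) (by simp [hAdef]) memAA, hAA, hAAtc]
  have hRRv : cfVal ((A ++ A).reverse)
      = ((p * p + q * p' : ℤ) : ℝ) / ((p' * p + q' * p' : ℤ) : ℝ) := by
    rw [List.reverse_append,
        cfVal_eq_contK (A.reverse ++ A.reverse) (by simp [hAdef]) memRR, hRR, hRRtc]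
  rw [hAAv, hRRv]
  push_cast
  rw [key]
  have hd1 : (q:ℝ) * p + q' * q ≠ 0 := by positivity
  have hd2 : (m:ℝ) * q * p + q' * ((m:ℝ) * q) ≠ 0 := by
    have hm' : (0:ℝ) < (m:ℝ) := by exact_mod_cast hm
    positivity
  field_simp
end

section
/- Let m be a positive integer and let A and B be finite sequences of positive integers. If A and B are both m-palindromes, then the concatenation ABA is an m-palindrome. -/
def cfMat : List ℕ → Matrix (Fin 2) (Fin 2) ℤ
  | [] => 1
  | a :: L => !![(a:ℤ),1;1,0] * cfMat L

lemma cfMat_append (L L' : List ℕ) : cfMat (L ++ L') = cfMat L * cfMat L' := by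
  induction L with
  | nil => simp [cfMat]
  | cons a L ih => simp [cfMat, ih, Matrix.mul_assoc]

lemma cfMat_single (a : ℕ) : cfMat [a] = !![(a:ℤ),1;1,0] := by
  simp [cfMat]

lemma cfMat_reverse (L : List ℕ) : cfMat L.reverse = (cfMat L).transpose := by
  induction L with
  | nil => simp [cfMat]
  | cons a L ih =>
    rw [List.reverse_cons, cfMat_append, ih, cfMat_single]
    show _ = (!![(a:ℤ),1;1,0] * cfMat L).transpose
    ext i j
    fin_cases i <;> fin_cases j <;>
      simp [Matrix.mul_apply, Fin.sum_univ_two, Matrix.transpose_apply,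
        Matrix.vecMul, dotProduct] <;> ring

lemma cf_val_spec : ∀ (L : List ℕ), L ≠ [] → (∀ x ∈ L, 0 < x) →
    cfVal L = (cfMat L 0 0 : ℝ) / (cfMat L 1 0 : ℝ) ∧
    0 < cfMat L 0 0 ∧ 0 < cfMat L 1 0 ∧ 0 < cfMat L 0 1 ∧ 0 ≤ cfMat L 1 1 := by
  intro L
  induction L with
  | nil => intro h; exact absurd rfl h
  | cons a L ih =>
    intro _ hpos
    have ha : 0 < a := hpos a (by simp)
    cases L with
    | nil =>
      simp [cfVal, cfMat]
      exact_mod_cast ha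
    | cons b rest =>
      obtain ⟨hval, hp, hq, hp', hq'⟩ := ih (by simp) (fun x hx => hpos x (by simp [hx]))
      set M := cfMat (b :: rest) with hM
      have hMul : cfMat (a :: b :: rest) = !![(a:ℤ),1;1,0] * M := rfl
      have e00 : cfMat (a :: b :: rest) 0 0 = a * M 0 0 + M 1 0 := by
        rw [hMul]; simp [Matrix.mul_apply, Fin.sum_univ_two]
      have e01 : cfMat (a :: b :: rest) 0 1 = a * M 0 1 + M 1 1 := by
        rw [hMul]; simp [Matrix.mul_apply, Fin.sum_univ_two]
      have e10 : cfMat (a :: b :: rest) 1 0 = M 0 0 := by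
        rw [hMul]; simp [Matrix.mul_apply, Fin.sum_univ_two]
      have e11 : cfMat (a :: b :: rest) 1 1 = M 0 1 := by
        rw [hMul]; simp [Matrix.mul_apply, Fin.sum_univ_two]
      have hcv : cfVal (a :: b :: rest) = a + 1 / cfVal (b :: rest) := rfl
      have hpR : (0:ℝ) < (M 0 0 : ℝ) := by exact_mod_cast hp
      have hqR : (0:ℝ) < (M 1 0 : ℝ) := by exact_mod_cast hq
      refine ⟨?_, ?_, ?_, ?_, ?_⟩
      · rw [hcv, hval, e00, e10]
        field_simp
        norm_cast
      · rw [e00]; positivity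
      · rw [e10]; exact hp
      · rw [e01]
        have : 0 < (a:ℤ) * M 0 1 := by positivity
        omega
      · rw [e11]; exact le_of_lt hp'

lemma isMPal_iff (m : ℕ) (hm : 0 < m) (L : List ℕ) (hpos : ∀ x ∈ L, 0 < x) :
    IsMPal m L ↔ cfMat L 0 1 = m * cfMat L 1 0 := by
  rcases eq_or_ne L [] with rfl | hne
  · simp [IsMPal, cfVal, cfMat, Matrix.one_apply]
  · obtain ⟨hval, hp, hq, hp', _⟩ := cf_val_spec L hne hpos
    have hne' : L.reverse ≠ [] := by simpa using hne
    obtain ⟨hvalr, _, _, _, _⟩ := cf_val_spec L.reverse hne' (fun x hx => hpos x (by simpa using hx))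
    rw [cfMat_reverse] at hvalr
    simp only [Matrix.transpose_apply] at hvalr
    have hpR : (0:ℝ) < (cfMat L 0 0 : ℝ) := by exact_mod_cast hp
    have hqR : (0:ℝ) < (cfMat L 1 0 : ℝ) := by exact_mod_cast hq
    have hp'R : (0:ℝ) < (cfMat L 0 1 : ℝ) := by exact_mod_cast hp'
    unfold IsMPal
    rw [hval, hvalr]
    rw [div_eq_iff (ne_of_gt hqR)]
    constructor
    · intro h
      have : (cfMat L 0 1 : ℝ) = m * cfMat L 1 0 := by
        field_simp at h
        nlinarith [h]
      exact_mod_cast this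
    · intro h
      have hR : (cfMat L 0 1 : ℝ) = m * cfMat L 1 0 := by exact_mod_cast h
      field_simp
      nlinarith [hR]

theorem m_palindrome_ABA
    (m : ℕ) (hm : 0 < m) (A B : List ℕ)
    (hApos : ∀ x ∈ A, 0 < x) (hBpos : ∀ x ∈ B, 0 < x)
    (hA : IsMPal m A) (hB : IsMPal m B) : IsMPal m (A ++ B ++ A) := by
  have hABApos : ∀ x ∈ A ++ B ++ A, 0 < x := by
    intro x hx
    simp only [List.mem_append] at hx
    rcases hx with (h | h) | h
    · exact hApos x h
    · exact hBpos x h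
    · exact hApos x h
  rw [isMPal_iff m hm A hApos] at hA
  rw [isMPal_iff m hm B hBpos] at hB
  rw [isMPal_iff m hm _ hABApos]
  rw [cfMat_append, cfMat_append]
  rw [Matrix.eta_fin_two (cfMat A), Matrix.eta_fin_two (cfMat B), hA, hB]
  simp [Matrix.mul_fin_two]
  ring
end

section
/- Let m and n be positive integers, and set A = (m) and B = (m², 1). Then m·[A^{2n}] = [B^n] and m·[A^{2n−1}] = [B^{n−1}, m²], and the concatenation B^n A^{2n} is an m-palindrome. -/
noncomputable def gmap (m : ℕ) (t : ℝ) : ℝ := (m : ℝ) ^ 2 + 1 / (1 + 1 / t)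

lemma cfVal_cons (a : ℕ) (Y : List ℕ) (hY : Y ≠ []) :
    cfVal (a :: Y) = (a : ℝ) + 1 / cfVal Y := by
  cases Y with
  | nil => exact absurd rfl hY
  | cons b t => rfl

lemma one_le_cfVal : ∀ (L : List ℕ), L ≠ [] → (∀ x ∈ L, 1 ≤ x) → 1 ≤ cfVal L
  | [], h, _ => absurd rfl h
  | [a], _, h => by
      have := h a (by simp)
      simp only [cfVal]
      exact_mod_cast this
  | a :: b :: t, _, h => by
      have hbt : 1 ≤ cfVal (b :: t) :=
        one_le_cfVal (b :: t) (by simp) (fun x hx => h x (by simp [hx]))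
      have ha : (1:ℝ) ≤ (a:ℝ) := by exact_mod_cast h a (by simp)
      have hpos : (0:ℝ) < cfVal (b :: t) := lt_of_lt_of_le one_pos hbt
      have h0 : (0:ℝ) ≤ 1 / cfVal (b :: t) := by positivity
      rw [cfVal_cons a _ (by simp)]
      linarith

lemma listPow_succ (A : List ℕ) (k : ℕ) : listPow A (k+1) = A ++ listPow A k := by
  simp [listPow, List.replicate_succ]

lemma listPow_succ' (A : List ℕ) (k : ℕ) : listPow A (k+1) = listPow A k ++ A := by
  simp [listPow, List.replicate_succ']

lemma mem_listPow {A : List ℕ} {k : ℕ} {x : ℕ} (hx : x ∈ listPow A k) : x ∈ A := by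
  simp only [listPow, List.mem_flatten] at hx
  obtain ⟨l, hl, hxl⟩ := hx
  rw [List.eq_of_mem_replicate hl] at hxl
  exact hxl

lemma listPow_single (x k : ℕ) : listPow [x] k = List.replicate k x := by
  induction k with
  | zero => rfl
  | succ j ih => rw [listPow_succ, ih]; simp [List.replicate_succ]

lemma reverse_listPow_pair (a b : ℕ) : ∀ k, (listPow [a, b] k).reverse = listPow [b, a] k
  | 0 => rfl
  | (k+1) => by
      rw [listPow_succ, List.reverse_append, reverse_listPow_pair a b k, listPow_succ']
      rfl

lemma listPow_pair_cons (a b : ℕ) : ∀ k, listPow [a, b] (k+1) = a :: (listPow [b, a] k ++ [b])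
  | 0 => rfl
  | (k+1) => by
      rw [listPow_succ [a,b] (k+1), listPow_pair_cons a b k, listPow_succ [b,a] k]
      simp

lemma cfVal_gstep (m : ℕ) (W : List ℕ) (hW : W ≠ []) (h1 : 1 ≤ cfVal W) :
    cfVal (m ^ 2 :: 1 :: W) = gmap m (cfVal W) := by
  rw [cfVal_cons _ (1 :: W) (by simp), cfVal_cons 1 W hW, gmap]
  push_cast
  ring

lemma cfVal_mstep (m : ℕ) (hm : 0 < m) (W : List ℕ) (hW : W ≠ []) (h1 : 1 ≤ cfVal W) :
    (m:ℝ) * cfVal (m :: m :: W) = gmap m ((m:ℝ) * cfVal W) := by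
  have hw : (0:ℝ) < cfVal W := lt_of_lt_of_le one_pos h1
  have hm' : (0:ℝ) < (m:ℝ) := by exact_mod_cast hm
  rw [cfVal_cons m (m :: W) (by simp), cfVal_cons m W hW, gmap]
  have h2 : (0:ℝ) < (m:ℝ) + 1 / cfVal W := by positivity
  have h3 : (0:ℝ) < 1 + 1 / ((m:ℝ) * cfVal W) := by positivity
  field_simp

lemma key1 (m : ℕ) (hm : 0 < m) : ∀ (k : ℕ) (Z : List ℕ), Z ≠ [] → (∀ x ∈ Z, 1 ≤ x) →
    cfVal (listPow [m ^ 2, 1] k ++ Z) = (gmap m)^[k] (cfVal Z)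
  | 0, Z, _, _ => by simp [listPow]
  | (k+1), Z, hZ, h1 => by
      set W := listPow [m ^ 2, 1] k ++ Z with hWdef
      have hW : W ≠ [] := by simp [hWdef, hZ]
      have hWmem : ∀ x ∈ W, 1 ≤ x := by
        intro x hx
        rcases List.mem_append.1 hx with h | h
        · have hx2 := mem_listPow h
          have hsq : 1 ≤ m ^ 2 := Nat.one_le_pow 2 m hm
          simp at hx2
          rcases hx2 with h' | h' <;> omega
        · exact h1 x h
      have hWv : 1 ≤ cfVal W := one_le_cfVal W hW hWmem
      have hstep : listPow [m ^ 2, 1] (k+1) ++ Z = m ^ 2 :: 1 :: W := by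
        rw [listPow_succ]; simp [hWdef]
      rw [hstep, cfVal_gstep m W hW hWv, hWdef, key1 m hm k Z hZ h1,
        Function.iterate_succ_apply']

lemma key2 (m : ℕ) (hm : 0 < m) : ∀ (k : ℕ) (Y : List ℕ), Y ≠ [] → (∀ x ∈ Y, 1 ≤ x) →
    (m:ℝ) * cfVal (listPow [m] (2 * k) ++ Y) = (gmap m)^[k] ((m:ℝ) * cfVal Y)
  | 0, Y, _, _ => by simp [listPow]
  | (k+1), Y, hY, h1 => by
      set W := listPow [m] (2 * k) ++ Y with hWdef
      have hW : W ≠ [] := by simp [hWdef, hY]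
      have hWmem : ∀ x ∈ W, 1 ≤ x := by
        intro x hx
        rcases List.mem_append.1 hx with h | h
        · have := mem_listPow h; simp at this; omega
        · exact h1 x h
      have hWv : 1 ≤ cfVal W := one_le_cfVal W hW hWmem
      have hstep : listPow [m] (2 * (k+1)) ++ Y = m :: m :: W := by
        have : 2 * (k+1) = (2 * k + 1) + 1 := by ring
        rw [this, listPow_succ, listPow_succ]; simp [hWdef]
      rw [hstep, cfVal_mstep m hm W hW hWv, hWdef, key2 m hm k Y hY h1,
        Function.iterate_succ_apply']

theorem example_m_palindrome_construction
    (m n : ℕ) (hm : 0 < m) (hn : 0 < n) :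
    (m : ℝ) * cfVal (listPow [m] (2 * n)) = cfVal (listPow [m ^ 2, 1] n) ∧
    (m : ℝ) * cfVal (listPow [m] (2 * n - 1)) =
      cfVal (listPow [m ^ 2, 1] (n - 1) ++ [m ^ 2]) ∧
    IsMPal m (listPow [m ^ 2, 1] n ++ listPow [m] (2 * n)) := by
  obtain ⟨k, rfl⟩ : ∃ k, n = k + 1 := ⟨n - 1, by omega⟩
  have hm0 : ((m:ℝ)) ≠ 0 := Nat.cast_ne_zero.2 hm.ne'
  have hsq : 1 ≤ m ^ 2 := Nat.one_le_pow 2 m hm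
  have hBmem : ∀ x ∈ ([m ^ 2, 1] : List ℕ), 1 ≤ x := by
    intro x hx; simp at hx; rcases hx with h | h <;> omega
  -- claim 2
  have hE_ne : listPow [m] (2 * k + 1) ≠ [] := by rw [listPow_single]; simp
  have hE_mem : ∀ x ∈ listPow [m] (2 * k + 1), 1 ≤ x := by
    intro x hx; have := mem_listPow hx; simp at this; omega
  have hE1 : 1 ≤ cfVal (listPow [m] (2 * k + 1)) := one_le_cfVal _ hE_ne hE_mem
  have claim2 : (m:ℝ) * cfVal (listPow [m] (2 * k + 1)) =
      cfVal (listPow [m ^ 2, 1] k ++ [m ^ 2]) := by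
    rw [listPow_succ', key2 m hm k [m] (by simp) (by intro x hx; simp at hx; omega),
      key1 m hm k [m ^ 2] (by simp) (by intro x hx; simp at hx; omega)]
    congr 1
    simp [cfVal]
    push_cast
    ring
  -- claim 1
  have claim1 : (m:ℝ) * cfVal (listPow [m] (2 * (k + 1))) =
      cfVal (listPow [m ^ 2, 1] (k + 1)) := by
    have e1 : listPow [m] (2 * (k + 1)) = listPow [m] (2 * k) ++ [m, m] := by
      have h : 2 * (k + 1) = (2 * k + 1) + 1 := by ring
      rw [h, listPow_succ', listPow_succ']; simp
    rw [e1, key2 m hm k [m, m] (by simp) (by intro x hx; simp at hx; omega),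
      listPow_succ', key1 m hm k [m ^ 2, 1] (by simp) hBmem]
    congr 1
    simp [cfVal]
    field_simp
  refine ⟨claim1, ?_, ?_⟩
  · have i1 : 2 * (k + 1) - 1 = 2 * k + 1 := by omega
    have i2 : k + 1 - 1 = k := by omega
    rw [i1, i2]
    exact claim2
  · unfold IsMPal
    have hA2n_ne : listPow [m] (2 * (k + 1)) ≠ [] := by rw [listPow_single]; simp
    have hA2n_mem : ∀ x ∈ listPow [m] (2 * (k + 1)), 1 ≤ x := by
      intro x hx; have := mem_listPow hx; simp at this; omega
    have hrev : (listPow [m ^ 2, 1] (k + 1) ++ listPow [m] (2 * (k + 1))).reverse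
        = listPow [m] (2 * (k + 1)) ++ listPow [1, m ^ 2] (k + 1) := by
      rw [List.reverse_append, reverse_listPow_pair, listPow_single,
        List.reverse_replicate, ← listPow_single]
    have hC_ne : listPow [1, m ^ 2] (k + 1) ≠ [] := by rw [listPow_pair_cons]; simp
    have hC_mem : ∀ x ∈ listPow [1, m ^ 2] (k + 1), 1 ≤ x := by
      intro x hx; have := mem_listPow hx; simp at this; rcases this with h | h <;> omega
    rw [hrev, key1 m hm (k + 1) _ hA2n_ne hA2n_mem,
      key2 m hm (k + 1) _ hC_ne hC_mem]
    congr 1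
    have hD_ne : listPow [m ^ 2, 1] k ++ [m ^ 2] ≠ [] := by simp
    rw [listPow_pair_cons 1 (m ^ 2) k, cfVal_cons 1 _ hD_ne, ← claim2]
    have hA2cons : listPow [m] (2 * (k + 1)) = m :: listPow [m] (2 * k + 1) := by
      rw [listPow_single, listPow_single]
      have h : 2 * (k + 1) = (2 * k + 1) + 1 := by ring
      rw [h, List.replicate_succ]
    rw [hA2cons, cfVal_cons m _ hE_ne]
    have hEpos : (0:ℝ) < cfVal (listPow [m] (2 * k + 1)) := lt_of_lt_of_le one_pos hE1
    push_cast
    field_simp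
end

section
/- Let m be a positive integer, let α = [a_0, a_1, a_2, …] be an irrational continued fraction whose partial quotients are all positive integers, and let p_k, q_k denote the continuants of its prefixes. If i ≥ 1 is an index such that the prefix (a_0, …, a_i) is an m-palindrome (equivalently, m·q_i = p_{i−1}), then |α² − m·p_i/q_{i−1}| < (1 + 3α)/q_{i−1}². -/
open Matrix


def matM (x : ℕ) : Matrix (Fin 2) (Fin 2) ℤ := !![(x:ℤ),1;1,0]

def matProd (L : List ℕ) : Matrix (Fin 2) (Fin 2) ℤ := (L.map matM).prod

section Mat

lemma matProd_cons (x : ℕ) (L : List ℕ) : matProd (x :: L) = matM x * matProd L := by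
  simp [matProd]

lemma matProd_append (L M : List ℕ) : matProd (L ++ M) = matProd L * matProd M := by
  simp [matProd]

lemma matProd_entries_nonneg (L : List ℕ) (h : ∀ x ∈ L, 0 < x) :
    1 ≤ matProd L 0 0 ∧ 0 ≤ matProd L 0 1 ∧ 0 ≤ matProd L 1 0 ∧ 0 ≤ matProd L 1 1 := by
  induction L with
  | nil => norm_num [matProd, Matrix.one_apply]
  | cons x L ih =>
    obtain ⟨h1, h2, h3, h4⟩ := ih (fun y hy => h y (List.mem_cons_of_mem _ hy))
    have hx : (1:ℤ) ≤ (x:ℤ) := by exact_mod_cast h x List.mem_cons_self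
    rw [matProd_cons]
    refine ⟨?_, ?_, ?_, ?_⟩ <;>
      simp [Matrix.mul_apply, Fin.sum_univ_two, matM] <;> nlinarith

lemma matProd_bl_pos (x : ℕ) (L : List ℕ) (h : ∀ y ∈ (x::L), 0 < y) :
    1 ≤ matProd (x :: L) 1 0 := by
  obtain ⟨h1, h2, h3, h4⟩ := matProd_entries_nonneg L (fun y hy => h y (List.mem_cons_of_mem _ hy))
  rw [matProd_cons]
  simp [Matrix.mul_apply, Fin.sum_univ_two, matM]
  nlinarith

lemma matProd_cons_00 (x : ℕ) (L : List ℕ) :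
    matProd (x :: L) 0 0 = (x:ℤ) * matProd L 0 0 + matProd L 1 0 := by
  rw [matProd_cons]; simp [Matrix.mul_apply, Fin.sum_univ_two, matM]

lemma matProd_cons_10 (x : ℕ) (L : List ℕ) :
    matProd (x :: L) 1 0 = matProd L 0 0 := by
  rw [matProd_cons]; simp [Matrix.mul_apply, Fin.sum_univ_two, matM]

lemma cfVal_eq_matProd : ∀ (L : List ℕ), (∀ x ∈ L, 0 < x) → L ≠ [] →
    cfVal L = (matProd L 0 0 : ℝ) / (matProd L 1 0 : ℝ)
  | [], _, hne => absurd rfl hne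
  | [x], h, _ => by
      simp [cfVal, matProd, matM]
  | (x :: y :: rest), h, _ => by
      have hy : ∀ z ∈ (y :: rest), 0 < z := fun z hz => h z (List.mem_cons_of_mem _ hz)
      have ih := cfVal_eq_matProd (y :: rest) hy (by simp)
      obtain ⟨h1, h2, h3, h4⟩ := matProd_entries_nonneg (y :: rest) hy
      have hbl := matProd_bl_pos y rest hy
      have h1' : (0:ℝ) < (matProd (y :: rest) 0 0 : ℝ) := by exact_mod_cast h1
      have hbl' : (0:ℝ) < (matProd (y :: rest) 1 0 : ℝ) := by exact_mod_cast hbl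
      rw [show cfVal (x :: y :: rest) = (x : ℝ) + 1 / cfVal (y :: rest) from rfl, ih,
        matProd_cons_00 x (y :: rest), matProd_cons_10 x (y :: rest), one_div_div]
      push_cast
      field_simp

lemma matM_symm (x : ℕ) : (matM x)ᵀ = matM x := by
  ext i j
  fin_cases i <;> fin_cases j <;> simp [matM]

lemma matProd_singleton (x : ℕ) : matProd [x] = matM x := by simp [matProd]

lemma matProd_reverse (L : List ℕ) : matProd L.reverse = (matProd L)ᵀ := by
  induction L with
  | nil => simp [matProd]
  | cons x L ih =>
    rw [List.reverse_cons, matProd_append, ih, matProd_singleton, matProd_cons,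
      Matrix.transpose_mul, matM_symm]

lemma cfPrefix_mem_pos (a : ℕ → ℕ) (ha : ∀ k, 0 < a k) (i : ℕ) :
    ∀ x ∈ cfPrefix a i, 0 < x := by
  intro x hx
  simp only [cfPrefix, List.mem_map] at hx
  obtain ⟨k, _, rfl⟩ := hx
  exact ha k

lemma cfPrefix_ne_nil (a : ℕ → ℕ) (i : ℕ) : cfPrefix a i ≠ [] := by
  simp [cfPrefix, List.range_succ]

lemma cfPrefix_succ (a : ℕ → ℕ) (k : ℕ) :
    cfPrefix a (k+1) = cfPrefix a k ++ [a (k+1)] := by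
  simp [cfPrefix, List.range_succ]

lemma matProd_cfPrefix (a : ℕ → ℕ) (k : ℕ) :
    matProd (cfPrefix a k) =
      !![contP a (k+1), contP a k; contQ a (k+1), contQ a k] := by
  induction k with
  | zero =>
    have : cfPrefix a 0 = [a 0] := by simp [cfPrefix, List.range_succ]
    rw [this, matProd_singleton]
    rfl
  | succ k ih =>
    rw [cfPrefix_succ, matProd_append, ih, matProd_singleton, matM, Matrix.mul_fin_two]
    rw [show contP a (k+2) = (a (k+1) : ℤ) * contP a (k+1) + contP a k from rfl,
      show contQ a (k+2) = (a (k+1) : ℤ) * contQ a (k+1) + contQ a k from rfl]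
    congr 1 <;> ring

end Mat

section Cont

lemma a_one_le (a : ℕ → ℕ) (ha : ∀ k, 0 < a k) (k : ℕ) : (1:ℤ) ≤ (a k : ℤ) := by exact_mod_cast ha k

lemma contQ_facts (a : ℕ → ℕ) (ha : ∀ k, 0 < a k) (k : ℕ) :
    0 ≤ contQ a k ∧ 1 ≤ contQ a (k+1) ∧ contQ a k ≤ contQ a (k+1) := by
  induction k with
  | zero => simp [contQ]
  | succ k ih =>
    obtain ⟨h0, h1, h2⟩ := ih
    have hx := a_one_le a ha (k+1)
    refine ⟨by linarith, ?_, ?_⟩ <;>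
      rw [show contQ a (k+2) = (a (k+1) : ℤ) * contQ a (k+1) + contQ a k from rfl] <;>
      nlinarith

lemma contQ_pos (a : ℕ → ℕ) (ha : ∀ k, 0 < a k) (k : ℕ) : 1 ≤ contQ a (k+1) := (contQ_facts a ha k).2.1

lemma contQ_mono (a : ℕ → ℕ) (ha : ∀ k, 0 < a k) (k : ℕ) : contQ a k ≤ contQ a (k+1) := (contQ_facts a ha k).2.2

lemma contP_facts (a : ℕ → ℕ) (ha : ∀ k, 0 < a k) (k : ℕ) : 1 ≤ contP a k ∧ contP a k ≤ contP a (k+1) := by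
  induction k with
  | zero => exact ⟨le_refl _, a_one_le a ha 0⟩
  | succ k ih =>
    have hx := a_one_le a ha (k+1)
    refine ⟨le_trans ih.1 ih.2, ?_⟩
    rw [show contP a (k+2) = (a (k+1) : ℤ) * contP a (k+1) + contP a k from rfl]
    nlinarith [ih.1, ih.2]

lemma contP_pos (a : ℕ → ℕ) (ha : ∀ k, 0 < a k) (k : ℕ) : 1 ≤ contP a k := (contP_facts a ha k).1

lemma contQP_facts (a : ℕ → ℕ) (ha : ∀ k, 0 < a k) (k : ℕ) :
    contQ a k ≤ contP a k ∧ contQ a (k+1) ≤ contP a (k+1) := by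
  induction k with
  | zero => exact ⟨by simp [contP, contQ], by simpa [contP, contQ] using a_one_le a ha 0⟩
  | succ k ih =>
    obtain ⟨h1, h2⟩ := ih
    have hx := a_one_le a ha (k+1)
    refine ⟨h2, ?_⟩
    rw [show contP a (k+2) = (a (k+1) : ℤ) * contP a (k+1) + contP a k from rfl,
      show contQ a (k+2) = (a (k+1) : ℤ) * contQ a (k+1) + contQ a k from rfl]
    nlinarith [mul_le_mul_of_nonneg_left h2 (le_trans zero_le_one hx)]

lemma contQ_le_contP (a : ℕ → ℕ) (ha : ∀ k, 0 < a k) (k : ℕ) : contQ a k ≤ contP a k :=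
  (contQP_facts a ha k).1

lemma contDet (a : ℕ → ℕ) (k : ℕ) :
    contP a (k+1) * contQ a k - contP a k * contQ a (k+1) = (-1:ℤ)^(k+1) := by
  induction k with
  | zero => simp [contP, contQ]
  | succ k ih =>
    rw [show contP a (k+2) = (a (k+1) : ℤ) * contP a (k+1) + contP a k from rfl,
      show contQ a (k+2) = (a (k+1) : ℤ) * contQ a (k+1) + contQ a k from rfl,
      pow_succ]
    nlinarith [ih]

end Cont

section Analytic

noncomputable def xc (a : ℕ → ℕ) (k : ℕ) : ℝ := (contP a (k+1) : ℝ) / (contQ a (k+1) : ℝ)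

noncomputable def eps (a : ℕ → ℕ) (k : ℕ) : ℝ :=
  1 / ((contQ a (k+1) : ℝ) * (contQ a (k+2) : ℝ))

lemma contQ_posR (a : ℕ → ℕ) (ha : ∀ k, 0 < a k) (k : ℕ) : (0:ℝ) < (contQ a (k+1) : ℝ) := by
  exact_mod_cast lt_of_lt_of_le zero_lt_one (contQ_pos a ha k)

lemma contQ_oneR (a : ℕ → ℕ) (ha : ∀ k, 0 < a k) (k : ℕ) : (1:ℝ) ≤ (contQ a (k+1) : ℝ) := by
  exact_mod_cast contQ_pos a ha k

lemma contQ_monoR (a : ℕ → ℕ) (ha : ∀ k, 0 < a k) (k : ℕ) :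
    (contQ a k : ℝ) ≤ (contQ a (k+1) : ℝ) := by exact_mod_cast contQ_mono a ha k

lemma eps_pos (a : ℕ → ℕ) (ha : ∀ k, 0 < a k) (k : ℕ) : 0 < eps a k := by
  have h1 := contQ_posR a ha k
  have h2 := contQ_posR a ha (k+1)
  unfold eps; positivity

lemma eps_anti (a : ℕ → ℕ) (ha : ∀ k, 0 < a k) (k : ℕ) : eps a (k+1) ≤ eps a k := by
  have h1 := contQ_posR a ha k
  have h2 := contQ_posR a ha (k+1)
  have h3 := contQ_posR a ha (k+2)
  have m1 := contQ_monoR a ha (k+1)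
  have m2 := contQ_monoR a ha (k+2)
  unfold eps
  apply one_div_le_one_div_of_le (by positivity)
  nlinarith

lemma xc_diff (a : ℕ → ℕ) (ha : ∀ k, 0 < a k) (k : ℕ) :
    xc a (k+1) - xc a k = (-1:ℝ)^k * eps a k := by
  have hd := contDet a (k+1)
  have hdR : (contP a (k+2) : ℝ) * (contQ a (k+1) : ℝ)
      - (contP a (k+1) : ℝ) * (contQ a (k+2) : ℝ) = (-1:ℝ)^k := by
    have : ((-1:ℤ)^(k+2) : ℝ) = (-1:ℝ)^k := by push_cast; ring
    rw [← this]; exact_mod_cast hd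
  have h1 := contQ_posR a ha k
  have h2 := contQ_posR a ha (k+1)
  unfold xc eps
  field_simp
  linear_combination hdR

lemma cfVal_prefix (a : ℕ → ℕ) (ha : ∀ k, 0 < a k) (k : ℕ) :
    cfVal (cfPrefix a k) = xc a k := by
  rw [cfVal_eq_matProd (cfPrefix a k) (cfPrefix_mem_pos a ha k) (cfPrefix_ne_nil a k),
    matProd_cfPrefix]
  simp [xc]

lemma cfVal_prefix_reverse (a : ℕ → ℕ) (ha : ∀ k, 0 < a k) (k : ℕ) :
    cfVal (cfPrefix a k).reverse = (contP a (k+1) : ℝ) / (contP a k : ℝ) := by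
  have hmem : ∀ x ∈ (cfPrefix a k).reverse, 0 < x := by
    intro x hx
    exact cfPrefix_mem_pos a ha k x (List.mem_reverse.mp hx)
  have hne : (cfPrefix a k).reverse ≠ [] := by
    simpa using cfPrefix_ne_nil a k
  rw [cfVal_eq_matProd _ hmem hne, matProd_reverse, matProd_cfPrefix]
  simp

lemma sandwich (a : ℕ → ℕ) (ha : ∀ k, 0 < a k) (k : ℕ) :
    min (xc a k) (xc a (k+1)) ≤ xc a (k+2) ∧ xc a (k+2) ≤ max (xc a k) (xc a (k+1)) := by
  have d1 := xc_diff a ha k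
  have d2 := xc_diff a ha (k+1)
  have he := eps_anti a ha k
  have hp := eps_pos a ha (k+1)
  rcases Nat.even_or_odd k with hk | hk
  · have e1 : (-1:ℝ)^k = 1 := hk.neg_one_pow
    have e2 : (-1:ℝ)^(k+1) = -1 := by rw [pow_succ, e1]; ring
    rw [e1] at d1; rw [e2] at d2
    constructor
    · exact le_trans (min_le_left _ _) (by linarith)
    · exact le_trans (by linarith) (le_max_right _ _)
  · have e1 : (-1:ℝ)^k = -1 := hk.neg_one_pow
    have e2 : (-1:ℝ)^(k+1) = 1 := by rw [pow_succ, e1]; ring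
    rw [e1] at d1; rw [e2] at d2
    constructor
    · exact le_trans (min_le_right _ _) (by linarith)
    · exact le_trans (by linarith) (le_max_left _ _)

lemma inIcc (a : ℕ → ℕ) (ha : ∀ k, 0 < a k) :
    ∀ (j k : ℕ), min (xc a k) (xc a (k+1)) ≤ xc a (k+j) ∧
      xc a (k+j) ≤ max (xc a k) (xc a (k+1)) := by
  intro j
  induction j with
  | zero => exact fun k => ⟨min_le_left _ _, le_max_left _ _⟩
  | succ j ih =>
    intro k
    have h := ih (k+1)
    have hs := sandwich a ha k
    have harr : k + (j+1) = (k+1) + j := by ring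
    rw [harr]
    constructor
    · exact le_trans (le_min (min_le_right _ _) hs.1) h.1
    · exact le_trans h.2 (max_le (le_max_right _ _) hs.2)

lemma alpha_close (a : ℕ → ℕ) (ha : ∀ k, 0 < a k) (α : ℝ)
    (hα : Filter.Tendsto (fun i => cfVal (cfPrefix a i)) Filter.atTop (nhds α)) (k : ℕ) :
    |α - xc a k| ≤ eps a k := by
  have hx : Filter.Tendsto (xc a) Filter.atTop (nhds α) := by
    have : (fun i => cfVal (cfPrefix a i)) = xc a := funext (cfVal_prefix a ha)
    rwa [this] at hα
  have hmin : min (xc a k) (xc a (k+1)) ≤ α := by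
    apply ge_of_tendsto hx
    filter_upwards [Filter.eventually_ge_atTop k] with n hn
    obtain ⟨j, rfl⟩ := Nat.exists_eq_add_of_le hn
    exact (inIcc a ha j k).1
  have hmax : α ≤ max (xc a k) (xc a (k+1)) := by
    apply le_of_tendsto hx
    filter_upwards [Filter.eventually_ge_atTop k] with n hn
    obtain ⟨j, rfl⟩ := Nat.exists_eq_add_of_le hn
    exact (inIcc a ha j k).2
  have hd : max (xc a k) (xc a (k+1)) - min (xc a k) (xc a (k+1)) = eps a k := by
    rw [max_sub_min_eq_abs, xc_diff a ha k, abs_mul, abs_pow, abs_neg,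
      abs_one, one_pow, one_mul, abs_of_pos (eps_pos a ha k)]
  have h1 : min (xc a k) (xc a (k+1)) ≤ xc a k := min_le_left _ _
  have h2 : xc a k ≤ max (xc a k) (xc a (k+1)) := le_max_left _ _
  rw [abs_le]
  constructor <;> linarith

lemma alpha_ge_one (a : ℕ → ℕ) (ha : ∀ k, 0 < a k) (α : ℝ)
    (hα : Filter.Tendsto (fun i => cfVal (cfPrefix a i)) Filter.atTop (nhds α)) :
    1 ≤ α := by
  apply ge_of_tendsto hα
  filter_upwards with n
  rw [cfVal_prefix a ha]
  have hQ := contQ_posR a ha n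
  have hPQ : (contQ a (n+1) : ℝ) ≤ (contP a (n+1) : ℝ) := by
    exact_mod_cast contQ_le_contP a ha (n+1)
  rw [xc, le_div_iff₀ hQ, one_mul]
  exact hPQ

end Analytic

lemma pal_eq (a : ℕ → ℕ) (ha : ∀ k, 0 < a k) (m : ℕ) (i : ℕ)
    (hpal : cfVal (cfPrefix a i) = (m : ℝ) * cfVal (cfPrefix a i).reverse) :
    (m:ℝ) * (contQ a (i+1) : ℝ) = (contP a i : ℝ) := by
  rw [cfVal_prefix a ha, cfVal_prefix_reverse a ha] at hpal
  have hP1 : (0:ℝ) < (contP a (i+1) : ℝ) := by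
    exact_mod_cast lt_of_lt_of_le zero_lt_one (contP_pos a ha (i+1))
  have hPi : (0:ℝ) < (contP a i : ℝ) := by
    exact_mod_cast lt_of_lt_of_le zero_lt_one (contP_pos a ha i)
  have hQ : (0:ℝ) < (contQ a (i+1) : ℝ) := contQ_posR a ha i
  rw [xc] at hpal
  field_simp at hpal
  have h2 : (contP a (i+1) : ℝ) * ((m:ℝ) * (contQ a (i+1) : ℝ))
      = (contP a (i+1) : ℝ) * (contP a i : ℝ) := by linear_combination -(contP a (i+1) : ℝ) * hpal
  exact mul_left_cancel₀ (ne_of_gt hP1) h2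

theorem m_palindrome_square_approximation
    (m : ℕ) (hm : 0 < m) (a : ℕ → ℕ) (ha : ∀ k, 0 < a k) (α : ℝ)
    (hα : Filter.Tendsto (fun i => cfVal (cfPrefix a i)) Filter.atTop (nhds α))
    (hirr : Irrational α)
    (i : ℕ) (hi : 1 ≤ i) (hpal : IsMPal m (cfPrefix a i)) :
    |α ^ 2 - (m : ℝ) * (contP a (i + 1) : ℝ) / (contQ a i : ℝ)| <
      (1 + 3 * α) / (contQ a i : ℝ) ^ 2 := by
  obtain ⟨j, rfl⟩ : ∃ j, i = j + 1 := ⟨i - 1, (Nat.succ_pred_eq_of_pos hi).symm⟩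
  have hpal' := pal_eq a ha m (j+1) hpal
  set u := xc a j with hu_def
  set v := xc a (j+1) with hv_def
  have h1 : |α - u| ≤ eps a j := alpha_close a ha α hα j
  have h2 : |α - v| ≤ eps a (j+1) := alpha_close a ha α hα (j+1)
  have hα1 : 1 ≤ α := alpha_ge_one a ha α hα
  have Q1 := contQ_posR a ha j
  have Q2 := contQ_posR a ha (j+1)
  have Q3 := contQ_posR a ha (j+2)
  have Qo := contQ_oneR a ha j
  have m1 := contQ_monoR a ha (j+1)
  have m2 := contQ_monoR a ha (j+2)
  set Qi := (contQ a (j+1) : ℝ) with hQi_def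
  have hQsq : (0:ℝ) < Qi^2 := by positivity
  have e1 : eps a j ≤ 1 / Qi^2 := by
    rw [eps]
    apply one_div_le_one_div_of_le (by positivity)
    nlinarith
  have e2 : eps a (j+1) ≤ 1 / Qi^2 := by
    rw [eps]
    apply one_div_le_one_div_of_le (by positivity)
    nlinarith
  have e3 : eps a j ≤ 1 := by
    rw [eps]
    rw [div_le_one (by positivity)]
    nlinarith
  have hu_pos : 0 < u := by
    rw [hu_def, xc]
    have : (0:ℝ) < (contP a (j+1) : ℝ) := by
      exact_mod_cast lt_of_lt_of_le zero_lt_one (contP_pos a ha (j+1))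
    positivity
  have hu_le : u ≤ α + 1 := by
    have := abs_le.mp h1
    linarith
  have hrw : (m : ℝ) * (contP a (j + 1 + 1) : ℝ) / (contQ a (j+1) : ℝ) = u * v := by
    rw [hu_def, hv_def, xc, xc]
    rw [div_mul_div_comm]
    rw [show (contP a (j+1) : ℝ) * (contP a (j+1+1) : ℝ)
        = ((m:ℝ) * (contQ a (j+1+1) : ℝ)) * (contP a (j+1+1) : ℝ) by rw [hpal']]
    field_simp
  rw [hrw]
  have key : α^2 - u*v = α*(α-u) + u*(α-v) := by ring
  have hb : |α^2 - u*v| ≤ α * eps a j + (α+1) * eps a (j+1) := by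
    rw [key]
    calc |α*(α-u) + u*(α-v)| ≤ |α*(α-u)| + |u*(α-v)| := abs_add_le _ _
      _ = α * |α-u| + u * |α-v| := by
          rw [abs_mul, abs_mul, abs_of_pos (by linarith : (0:ℝ) < α), abs_of_pos hu_pos]
      _ ≤ α * eps a j + (α+1) * eps a (j+1) := by
          have t1 : α * |α-u| ≤ α * eps a j :=
            mul_le_mul_of_nonneg_left h1 (by linarith)
          have t2 : u * |α-v| ≤ (α+1) * eps a (j+1) :=
            mul_le_mul hu_le h2 (abs_nonneg _) (by linarith)
          linarith
  have hb2 : α * eps a j + (α+1) * eps a (j+1) ≤ (2*α+1) / Qi^2 := by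
    have t1 : α * eps a j ≤ α * (1/Qi^2) := mul_le_mul_of_nonneg_left e1 (by linarith)
    have t2 : (α+1) * eps a (j+1) ≤ (α+1) * (1/Qi^2) :=
      mul_le_mul_of_nonneg_left e2 (by linarith)
    have : α * (1/Qi^2) + (α+1) * (1/Qi^2) = (2*α+1)/Qi^2 := by ring
    linarith
  have hlt : (2*α+1) / Qi^2 < (1 + 3*α) / Qi^2 := by
    rw [div_lt_div_iff₀ hQsq hQsq]
    nlinarith
  calc |α^2 - u*v| ≤ α * eps a j + (α+1) * eps a (j+1) := hb
    _ ≤ (2*α+1) / Qi^2 := hb2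
    _ < (1 + 3*α) / Qi^2 := hlt
end

section
/- Let m be a positive integer, let A and X be finite sequences of positive integers that are both m-palindromes, and let (n_k)_{k≥1} be a sequence of positive integers. Define S_{A,k}(Y) = Y A^{n_k} Y (concatenation) and T_{A,k}(X) = S_{A,k} ∘ S_{A,k−1} ∘ ⋯ ∘ S_{A,1}(X). Then for every k ≥ 1 the sequence T_{A,k}(X) is an m-palindrome. -/
namespace PSMP

open Matrix

def mat (a : ℕ) : Matrix (Fin 2) (Fin 2) ℤ := !![(a : ℤ), 1; 1, 0]

def Mm (B : List ℕ) : Matrix (Fin 2) (Fin 2) ℤ := (B.map mat).prod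

lemma Mm_nil : Mm [] = 1 := rfl

lemma Mm_cons (a : ℕ) (B : List ℕ) : Mm (a :: B) = mat a * Mm B := by
  simp [Mm]

lemma Mm_append (B C : List ℕ) : Mm (B ++ C) = Mm B * Mm C := by
  simp [Mm]

lemma Mm_singleton (a : ℕ) : Mm [a] = mat a := by
  simp [Mm]

lemma mat_transpose (a : ℕ) : (mat a)ᵀ = mat a := by
  ext i j
  fin_cases i <;> fin_cases j <;> simp [mat]

lemma Mm_reverse (B : List ℕ) : Mm B.reverse = (Mm B)ᵀ := by
  induction B with
  | nil => simp [Mm_nil]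
  | cons a B ih =>
    rw [List.reverse_cons, Mm_append, ih, Mm_singleton, Mm_cons,
      Matrix.transpose_mul, mat_transpose]

lemma entries (B : List ℕ) (hpos : ∀ x ∈ B, 0 < x) (hne : B ≠ []) :
    1 ≤ Mm B 0 0 ∧ 1 ≤ Mm B 1 0 ∧ 1 ≤ Mm B 0 1 ∧ 0 ≤ Mm B 1 1 ∧
      cfVal B = (Mm B 0 0 : ℝ) / (Mm B 1 0) := by
  induction B with
  | nil => exact absurd rfl hne
  | cons a B ih =>
    have ha : 1 ≤ (a : ℤ) := by
      exact_mod_cast hpos a List.mem_cons_self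
    match B with
    | [] =>
      refine ⟨?_, ?_, ?_, ?_, ?_⟩ <;>
        simp [Mm_singleton, mat, cfVal, ha]
    | b :: rest =>
      obtain ⟨h1, h2, h3, h4, h5⟩ := ih (fun x hx => hpos x (List.mem_cons_of_mem a hx))
        (by simp)
      have e00 : Mm (a :: b :: rest) 0 0
          = a * Mm (b :: rest) 0 0 + Mm (b :: rest) 1 0 := by
        rw [Mm_cons]
        simp [Matrix.mul_apply, Fin.sum_univ_two, mat]
      have e10 : Mm (a :: b :: rest) 1 0 = Mm (b :: rest) 0 0 := by
        rw [Mm_cons]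
        simp [Matrix.mul_apply, Fin.sum_univ_two, mat]
      have e01 : Mm (a :: b :: rest) 0 1
          = a * Mm (b :: rest) 0 1 + Mm (b :: rest) 1 1 := by
        rw [Mm_cons]
        simp [Matrix.mul_apply, Fin.sum_univ_two, mat]
      have e11 : Mm (a :: b :: rest) 1 1 = Mm (b :: rest) 0 1 := by
        rw [Mm_cons]
        simp [Matrix.mul_apply, Fin.sum_univ_two, mat]
      refine ⟨?_, ?_, ?_, ?_, ?_⟩
      · rw [e00]; nlinarith
      · rw [e10]; exact h1
      · rw [e01]; nlinarith
      · rw [e11]; linarith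
      · have hp : (0 : ℝ) < (Mm (b :: rest) 0 0 : ℝ) := by exact_mod_cast h1
        have hq : (0 : ℝ) < (Mm (b :: rest) 1 0 : ℝ) := by exact_mod_cast h2
        have hcf : cfVal (a :: b :: rest) = (a : ℝ) + 1 / cfVal (b :: rest) := rfl
        rw [hcf, h5, e00, e10]
        push_cast
        field_simp
        try ring

def Cc (m : ℕ) (P : Matrix (Fin 2) (Fin 2) ℤ) : Prop := P 0 1 = m * P 1 0

lemma Cc_one (m : ℕ) : Cc m 1 := by simp [Cc]

lemma Cc_sandwich {m : ℕ} {Q P : Matrix (Fin 2) (Fin 2) ℤ}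
    (hQ : Cc m Q) (hP : Cc m P) : Cc m (Q * P * Q) := by
  simp only [Cc, Matrix.mul_apply, Fin.sum_univ_two] at hQ hP ⊢
  rw [hQ, hP]
  ring

lemma Cc_pow {m : ℕ} {P : Matrix (Fin 2) (Fin 2) ℤ} (hP : Cc m P) :
    ∀ k, Cc m (P ^ k) := by
  have key : ∀ k, Cc m (P ^ k) ∧ Cc m (P ^ (k + 1)) := by
    intro k
    induction k with
    | zero => exact ⟨by simpa using Cc_one m, by simpa using hP⟩
    | succ k ih =>
      refine ⟨ih.2, ?_⟩
      have h : P ^ (k + 1 + 1) = P * P ^ k * P := by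
        rw [pow_succ, pow_succ']
      rw [h]
      exact Cc_sandwich hP ih.1
  exact fun k => (key k).1

lemma Mm_listPow (A : List ℕ) (k : ℕ) : Mm (listPow A k) = (Mm A) ^ k := by
  induction k with
  | zero => simp [listPow, Mm_nil]
  | succ k ih =>
    have h : listPow A (k + 1) = A ++ listPow A k := by
      simp [listPow, List.replicate_succ]
    rw [h, Mm_append, ih, pow_succ']

lemma isMPal_iff {m : ℕ} (hm : 0 < m) (B : List ℕ) (hpos : ∀ x ∈ B, 0 < x)
    (hne : B ≠ []) : IsMPal m B ↔ Cc m (Mm B) := by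
  obtain ⟨h1, h2, h3, _, h5⟩ := entries B hpos hne
  obtain ⟨_, _, _, _, h5'⟩ := entries B.reverse
    (fun x hx => hpos x (List.mem_reverse.mp hx)) (by simpa using hne)
  rw [Mm_reverse] at h5'
  simp only [Matrix.transpose_apply] at h5'
  have hp : (0 : ℝ) < (Mm B 0 0 : ℝ) := by exact_mod_cast h1
  have hq : (0 : ℝ) < (Mm B 1 0 : ℝ) := by exact_mod_cast h2
  have hr : (0 : ℝ) < (Mm B 0 1 : ℝ) := by exact_mod_cast h3
  have hm' : (0 : ℝ) < (m : ℝ) := by exact_mod_cast hm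
  unfold IsMPal Cc
  rw [h5, h5']
  constructor
  · intro h
    have h' : (Mm B 0 0 : ℝ) * (Mm B 0 1) = (m : ℝ) * (Mm B 0 0) * (Mm B 1 0) := by
      field_simp at h
      rw [h]; ring
    have h'' : (Mm B 0 1 : ℝ) = (m : ℝ) * (Mm B 1 0) := by
      have := mul_left_cancel₀ (ne_of_gt hp) (by linarith [h'] :
        (Mm B 0 0 : ℝ) * (Mm B 0 1) = (Mm B 0 0) * ((m : ℝ) * (Mm B 1 0)))
      exact this
    exact_mod_cast h''
  · intro h
    have h' : (Mm B 0 1 : ℝ) = (m : ℝ) * (Mm B 1 0) := by exact_mod_cast h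
    rw [h']
    field_simp

end PSMP

theorem perturbed_symmetry_m_palindrome
    (m : ℕ) (hm : 0 < m) (A X : List ℕ)
    (hApos : ∀ x ∈ A, 0 < x) (hXpos : ∀ x ∈ X, 0 < x)
    (hA : IsMPal m A) (hX : IsMPal m X)
    (n : ℕ → ℕ) (hn : ∀ k, 1 ≤ k → 0 < n k)
    (T : ℕ → List ℕ) (hT0 : T 0 = X)
    (hTk : ∀ k, T (k + 1) = T k ++ listPow A (n (k + 1)) ++ T k) :
    ∀ k, 1 ≤ k → IsMPal m (T k) := by
  classical
  open PSMP in
  have hTpos : ∀ k, ∀ x ∈ T k, 0 < x := by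
    intro k
    induction k with
    | zero => rw [hT0]; exact hXpos
    | succ k ih =>
      rw [hTk k]
      intro x hx
      simp only [List.mem_append, listPow, List.mem_flatten, List.mem_replicate] at hx
      rcases hx with (hx | ⟨l, ⟨_, rfl⟩, hx⟩) | hx
      · exact ih x hx
      · exact hApos x hx
      · exact ih x hx
  have hCA : Cc m (Mm A) := by
    rcases eq_or_ne A [] with h | h
    · rw [h, Mm_nil]; exact Cc_one m
    · exact (isMPal_iff hm A hApos h).mp hA
  have hCX : Cc m (Mm X) := by
    rcases eq_or_ne X [] with h | h
    · rw [h, Mm_nil]; exact Cc_one m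
    · exact (isMPal_iff hm X hXpos h).mp hX
  have hCT : ∀ k, Cc m (Mm (T k)) := by
    intro k
    induction k with
    | zero => rw [hT0]; exact hCX
    | succ k ih =>
      rw [hTk k, Mm_append, Mm_append, Mm_listPow]
      exact Cc_sandwich ih (Cc_pow hCA _)
  intro k _
  rcases eq_or_ne (T k) [] with h | h
  · rw [IsMPal, h]
    simp [cfVal]
  · exact (isMPal_iff hm (T k) (hTpos k) h).mpr (hCT k)
end

section
/- Let m, r, s be positive integers with r ≠ s. Let F be the infinite Fibonacci word over {a, b} (the limit of the words S_0 = (a), S_1 = (a, b), S_{n+1} = S_n S_{n−1}), and let F(m,r,s) be the infinite sequence of positive integers obtained by replacing each a by (rm, r) and each b by (sm, s). Then F(m,r,s) is m-palindromic and its m-palindromic density satisfies d_m([F(m,r,s)]) ≥ 1/φ, where φ = (1 + √5)/2. -/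
/-- The finite Fibonacci words over the alphabet `{a, b}` (with `a = false`, `b = true`):
`S₀ = (a)`, `S₁ = (a, b)`, `S_{n+1} = S_n S_{n-1}`. -/
def fibWord : ℕ → List Bool
  | 0 => [false]
  | 1 => [false, true]
  | (n+2) => fibWord (n+1) ++ fibWord n

/-- The sequence `F(m,r,s)` obtained from the infinite Fibonacci word `f`
(with `a = false`, `b = true`) by replacing each `a` by `(r·m, r)` and each `b` by `(s·m, s)`. -/
def fibCF (f : ℕ → Bool) (m r s : ℕ) (k : ℕ) : ℕ :=
  if f (k / 2) then (if k % 2 = 0 then s * m else s)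
  else (if k % 2 = 0 then r * m else r)


open Matrix Filter Real goldenRatio

namespace FibMPal

abbrev M2 := Matrix (Fin 2) (Fin 2) ℤ

def mat1 (a : ℕ) : M2 := !![(a:ℤ),1;1,0]

def matL : List ℕ → M2
  | [] => 1
  | a :: l => mat1 a * matL l

lemma matL_append (A B : List ℕ) : matL (A ++ B) = matL A * matL B := by
  induction A with
  | nil => simp [matL]
  | cons a l ih => simp [matL, ih, Matrix.mul_assoc]

lemma mat1_transpose (a : ℕ) : (mat1 a)ᵀ = mat1 a := by
  ext i j; fin_cases i <;> fin_cases j <;> simp [mat1]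

lemma matL_reverse (A : List ℕ) : matL A.reverse = (matL A)ᵀ := by
  induction A with
  | nil => simp [matL]
  | cons a l ih =>
    rw [List.reverse_cons, matL_append, ih]
    show _ * matL [a] = (mat1 a * matL l)ᵀ
    rw [Matrix.transpose_mul, mat1_transpose]
    simp [matL]

lemma mul_entry (X Y : M2) (i j : Fin 2) : (X * Y) i j = X i 0 * Y 0 j + X i 1 * Y 1 j := by
  rw [Matrix.mul_apply, Fin.sum_univ_two]

lemma matL_cons (a : ℕ) (l : List ℕ) :
    matL (a :: l) 0 0 = a * matL l 0 0 + matL l 1 0 ∧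
    matL (a :: l) 0 1 = a * matL l 0 1 + matL l 1 1 ∧
    matL (a :: l) 1 0 = matL l 0 0 ∧ matL (a :: l) 1 1 = matL l 0 1 := by
  show (mat1 a * matL l) 0 0 = _ ∧ (mat1 a * matL l) 0 1 = _ ∧ (mat1 a * matL l) 1 0 = _ ∧
    (mat1 a * matL l) 1 1 = _
  simp [mul_entry, mat1]

lemma matL_pos : ∀ (A : List ℕ), (∀ x ∈ A, 0 < x) →
    1 ≤ matL A 0 0 ∧ 0 ≤ matL A 1 0 ∧ 0 ≤ matL A 0 1 ∧ 0 ≤ matL A 1 1 ∧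
    (A ≠ [] → 1 ≤ matL A 1 0 ∧ 1 ≤ matL A 0 1) := by
  intro A
  induction A with
  | nil => intro _; simp [matL, Matrix.one_apply]
  | cons a l ih =>
    intro hpos
    have ha : 1 ≤ (a:ℤ) := by exact_mod_cast hpos a List.mem_cons_self
    have ihl := ih (fun x hx => hpos x (List.mem_cons_of_mem a hx))
    obtain ⟨h1, h2, h3, h4, h5⟩ := ihl
    obtain ⟨e1, e2, e3, e4⟩ := matL_cons a l
    refine ⟨?_, ?_, ?_, ?_, fun _ => ⟨?_, ?_⟩⟩
    · rw [e1]; nlinarith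
    · rw [e3]; linarith
    · rw [e2]; nlinarith
    · rw [e4]; linarith
    · rw [e3]; linarith
    · rw [e2]
      rcases eq_or_ne l [] with hl | hl
      · subst hl; simp [matL, Matrix.one_apply]
      · obtain ⟨g1, g2⟩ := h5 hl; nlinarith

lemma cfVal_eq : ∀ (A : List ℕ), A ≠ [] → (∀ x ∈ A, 0 < x) →
    cfVal A = (matL A 0 0 : ℝ) / (matL A 1 0 : ℝ) := by
  intro A
  induction A with
  | nil => intro h; exact absurd rfl h
  | cons a l ih =>
    intro _ hpos
    obtain ⟨e1, _, e3, _⟩ := matL_cons a l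
    rcases eq_or_ne l [] with hl | hl
    · subst hl
      show (a:ℝ) = _
      rw [e1, e3]; norm_num [matL, Matrix.one_apply]
    · obtain ⟨b, l', rfl⟩ := List.exists_cons_of_ne_nil hl
      have hlpos : ∀ x ∈ b :: l', 0 < x := fun x hx => hpos x (List.mem_cons_of_mem a hx)
      have ihv := ih hl hlpos
      obtain ⟨p1, _, _, _, p5⟩ := matL_pos _ hlpos
      obtain ⟨q1, _⟩ := p5 hl
      have h00 : (0:ℝ) < (matL (b :: l') 0 0 : ℝ) := by exact_mod_cast p1
      have h10 : (0:ℝ) < (matL (b :: l') 1 0 : ℝ) := by exact_mod_cast q1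
      show (a:ℝ) + 1 / cfVal (b :: l') = _
      rw [ihv, e1, e3]
      push_cast
      rw [one_div_div]
      field_simp

lemma isMPal_of_entry (m : ℕ) (hm : 0 < m) (A : List ℕ) (hA : A ≠ [])
    (hpos : ∀ x ∈ A, 0 < x) (h : matL A 0 1 = (m:ℤ) * matL A 1 0) : IsMPal m A := by
  have hrpos : ∀ x ∈ A.reverse, 0 < x := fun x hx => hpos x (List.mem_reverse.mp hx)
  have hrne : A.reverse ≠ [] := by simpa using hA
  obtain ⟨_, _, _, _, p5⟩ := matL_pos A hpos
  obtain ⟨q10, _⟩ := p5 hA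
  rw [IsMPal, cfVal_eq A hA hpos, cfVal_eq A.reverse hrne hrpos, matL_reverse]
  rw [Matrix.transpose_apply, Matrix.transpose_apply, h]
  have hq : (0:ℝ) < (matL A 1 0 : ℝ) := by exact_mod_cast q10
  have hmr : (0:ℝ) < (m:ℝ) := by exact_mod_cast hm
  push_cast
  rw [mul_div_assoc', div_eq_div_iff (ne_of_gt hq) (by positivity)]
  ring

/-! ### Substitution -/

def blockB (m r s : ℕ) (b : Bool) : List ℕ := if b then [s*m, s] else [r*m, r]

def substW (m r s : ℕ) (w : List Bool) : List ℕ := w.flatMap (blockB m r s)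

lemma substW_nil (m r s : ℕ) : substW m r s [] = [] := rfl

lemma substW_cons (m r s : ℕ) (b : Bool) (w : List Bool) :
    substW m r s (b :: w) = blockB m r s b ++ substW m r s w := rfl

lemma substW_append (m r s : ℕ) (v w : List Bool) :
    substW m r s (v ++ w) = substW m r s v ++ substW m r s w := by
  simp [substW]

lemma substW_pos (m r s : ℕ) (hm : 0 < m) (hr : 0 < r) (hs : 0 < s) (w : List Bool) :
    ∀ x ∈ substW m r s w, 0 < x := by
  intro x hx
  simp only [substW, List.mem_flatMap] at hx
  obtain ⟨b, _, hb⟩ := hx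
  cases b <;> simp [blockB] at hb <;> rcases hb with h | h <;> subst h <;> positivity

lemma substW_length (m r s : ℕ) (w : List Bool) : (substW m r s w).length = 2 * w.length := by
  induction w with
  | nil => rfl
  | cons b w ih =>
    rw [substW_cons, List.length_append, ih, List.length_cons]
    cases b <;> simp [blockB] <;> ring

lemma matL_block (c m : ℕ) :
    matL [c*m, c] 0 0 = (c:ℤ)*c*m+1 ∧ matL [c*m, c] 0 1 = (c:ℤ)*m ∧
      matL [c*m, c] 1 0 = (c:ℤ) ∧ matL [c*m, c] 1 1 = 1 := by
  have h : matL [c*m, c] = mat1 (c*m) * (mat1 c * 1) := rfl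
  rw [h, mul_one]
  refine ⟨?_, ?_, ?_, ?_⟩ <;> rw [mul_entry] <;> simp [mat1] <;> push_cast <;> ring

lemma matB_entries (m r s : ℕ) (b : Bool) :
    ∃ c : ℕ, matL (blockB m r s b) 0 0 = (c:ℤ)*c*m+1 ∧ matL (blockB m r s b) 0 1 = (c:ℤ)*m ∧
      matL (blockB m r s b) 1 0 = (c:ℤ) ∧ matL (blockB m r s b) 1 1 = 1 := by
  refine ⟨if b then s else r, ?_⟩
  cases b
  · simpa [blockB] using matL_block r m
  · simpa [blockB] using matL_block s m

lemma twist (m r s : ℕ) (w : List Bool) :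
    matL (substW m r s w) 0 0 = matL (substW m r s w.reverse) 0 0 ∧
    matL (substW m r s w) 1 1 = matL (substW m r s w.reverse) 1 1 ∧
    matL (substW m r s w) 0 1 = m * matL (substW m r s w.reverse) 1 0 ∧
    matL (substW m r s w.reverse) 0 1 = m * matL (substW m r s w) 1 0 := by
  induction w with
  | nil => simp [substW_nil, matL]
  | cons b w ih =>
    obtain ⟨i1, i2, i3, i4⟩ := ih
    obtain ⟨c, c1, c2, c3, c4⟩ := matB_entries m r s b
    have hrev : (b :: w).reverse = w.reverse ++ [b] := by simp
    have hl : substW m r s (b :: w) = blockB m r s b ++ substW m r s w := substW_cons ..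
    have hr : substW m r s (w.reverse ++ [b]) = substW m r s w.reverse ++ blockB m r s b := by
      rw [substW_append]; simp [substW]
    rw [hrev, hl, hr, matL_append, matL_append]
    rw [mul_entry, mul_entry, mul_entry, mul_entry, mul_entry, mul_entry, mul_entry, mul_entry]
    rw [c1, c2, c3, c4]
    refine ⟨?_, ?_, ?_, ?_⟩
    · linear_combination ((c:ℤ)*c*m+1) * i1 - (c:ℤ) * i4
    · linear_combination (c:ℤ) * i3 + i2
    · linear_combination ((c:ℤ)*(c:ℤ)*(m:ℤ)+1) * i3 + (c:ℤ)*(m:ℤ) * i2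
    · linear_combination (-(c:ℤ)*(m:ℤ)) * i1 + i4

/-! ### Fibonacci word palindromic prefixes -/

def palW : ℕ → List Bool
  | 0 => [false]
  | 1 => [false, true, false]
  | (n+2) => fibWord (n+3) ++ palW n

def tW (n : ℕ) : List Bool := if n % 2 = 0 then [true, false] else [false, true]

lemma tW_succ_succ (n : ℕ) : tW (n+2) = tW n := by
  simp [tW, Nat.add_mod_right]

lemma tW_rev (n : ℕ) : (tW (n+1)).reverse = tW n := by
  rcases Nat.mod_two_eq_zero_or_one n with h | h
  · have h1 : (n+1) % 2 = 1 := by omega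
    simp [tW, h, h1]
  · have h1 : (n+1) % 2 = 0 := by omega
    simp [tW, h, h1]

lemma fibWord_eq_pal (n : ℕ) : fibWord (n+2) = palW n ++ tW n := by
  induction n using Nat.strong_induction_on with
  | _ n ih =>
    match n with
    | 0 => decide
    | 1 => decide
    | (k+2) =>
      have h := ih k (by omega)
      show fibWord (k+3) ++ fibWord (k+2) = (fibWord (k+3) ++ palW k) ++ tW (k+2)
      rw [h, tW_succ_succ, List.append_assoc]

lemma starLem (k : ℕ) : fibWord (k+2) ++ palW (k+1) = fibWord (k+3) ++ palW k := by
  induction k with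
  | zero => decide
  | succ k ih =>
    show fibWord (k+3) ++ (fibWord (k+3) ++ palW k) = (fibWord (k+3) ++ fibWord (k+2)) ++ palW (k+1)
    rw [← ih, List.append_assoc]

lemma palW_palindrome (n : ℕ) : (palW n).reverse = palW n := by
  induction n using Nat.strong_induction_on with
  | _ n ih =>
    match n with
    | 0 => decide
    | 1 => decide
    | (k+2) =>
      show (fibWord (k+3) ++ palW k).reverse = _
      rw [List.reverse_append, ih k (by omega), fibWord_eq_pal (k+1), List.reverse_append,
        tW_rev, ih (k+1) (by omega), ← List.append_assoc]
      show (palW k ++ tW k) ++ palW (k+1) = _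
      rw [← fibWord_eq_pal k, starLem k]
      rfl

lemma fibWord_length (n : ℕ) : (fibWord n).length = Nat.fib (n+2) := by
  induction n using Nat.strong_induction_on with
  | _ n ih =>
    match n with
    | 0 => decide
    | 1 => decide
    | (k+2) =>
      have a1 : (fibWord (k+1)).length = Nat.fib (k+3) := ih (k+1) (by omega)
      have a0 : (fibWord k).length = Nat.fib (k+2) := ih k (by omega)
      show (fibWord (k+1) ++ fibWord k).length = Nat.fib (k+4)
      have hfib : Nat.fib (k+4) = Nat.fib (k+2) + Nat.fib (k+3) := Nat.fib_add_two
      rw [List.length_append, a1, a0, hfib]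
      exact Nat.add_comm _ _

lemma palW_length (n : ℕ) : (palW n).length + 2 = Nat.fib (n+4) := by
  have h := congrArg List.length (fibWord_eq_pal n)
  rw [fibWord_length, List.length_append] at h
  have h2 : Nat.fib (n+4) = (palW n).length + (tW n).length := h
  have ht : (tW n).length = 2 := by unfold tW; split <;> rfl
  omega

/-! ### Prefixes of the CF sequence -/

lemma range_map_fibCF (f : ℕ → Bool) (m r s : ℕ) (L : ℕ) :
    (List.range (2*L)).map (fibCF f m r s) = substW m r s ((List.range L).map f) := by
  induction L with
  | zero => rfl
  | succ L ih =>
    have h2 : 2*(L+1) = (2*L) + 1 + 1 := by ring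
    rw [h2, List.range_succ, List.range_succ, List.map_append, List.map_append, ih,
        List.range_succ, List.map_append, substW_append, List.append_assoc]
    congr 1
    have e1 : (2*L)/2 = L := by omega
    have e2 : (2*L) % 2 = 0 := by omega
    have e3 : (2*L+1)/2 = L := by omega
    have e4 : (2*L+1) % 2 = 1 := by omega
    cases hfl : f L <;>
      simp [substW, blockB, fibCF, e1, e2, e3, e4, hfl]

lemma prefix_map (f : ℕ → Bool) (w v t : List Bool)
    (h : (List.range (w.length)).map f = w) (hwv : w = v ++ t) :
    (List.range v.length).map f = v := by
  have hle : v.length ≤ w.length := by subst hwv; simp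
  have h1 := congrArg (List.take v.length) h
  rw [← List.map_take, List.take_range, min_eq_left hle] at h1
  rw [h1, hwv, List.take_left]

/-! ### The consecutive-ratio chain argument -/

lemma chainLem (p : ℕ → Prop) (hp : (setOf p).Infinite) (x y : ℕ) (hx : p x) (hy : p y)
    (hxy : x < y) :
    ∃ k, x ≤ Nat.nth p k ∧
      ((x:ℝ)+1)/((y:ℝ)+1) ≤ ((Nat.nth p k : ℝ)+1)/((Nat.nth p (k+1):ℝ)+1) := by
  classical
  by_contra hcon
  push_neg at hcon
  set cx := Nat.count p x with hcx
  set cy := Nat.count p y with hcy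
  have hnx : Nat.nth p cx = x := Nat.nth_count hx
  have hny : Nat.nth p cy = y := Nat.nth_count hy
  have hcc : cx < cy := by
    refine (Nat.nth_lt_nth hp).mp ?_
    rw [hnx, hny]; exact hxy
  set ρ : ℝ := ((x:ℝ)+1)/((y:ℝ)+1) with hρ
  have hy1 : (0:ℝ) < (y:ℝ)+1 := by positivity
  have hρpos : 0 < ρ := by positivity
  have hρlt : ρ < 1 := by
    rw [hρ, div_lt_one hy1]
    have : (x:ℝ) < (y:ℝ) := by exact_mod_cast hxy
    linarith
  have step : ∀ k, x ≤ Nat.nth p k →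
      (Nat.nth p k : ℝ) + 1 < ρ * ((Nat.nth p (k+1) : ℝ) + 1) := by
    intro k hk
    have h := hcon k hk
    rw [div_lt_div_iff₀ (by positivity) (by positivity)] at h
    rw [hρ, div_mul_eq_mul_div, lt_div_iff₀ hy1]
    nlinarith [h]
  have key : ∀ d, 1 ≤ d → cx + d ≤ cy →
      ((x:ℝ)+1) < ρ^d * ((Nat.nth p (cx+d) : ℝ)+1) := by
    intro d
    induction d with
    | zero => omega
    | succ d ih =>
      intro _ hle
      rcases Nat.eq_zero_or_pos d with rfl | hd
      · have h := step cx (le_of_eq hnx.symm)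
        rw [hnx] at h
        simpa using h
      · have ihd := ih hd (by omega)
        have hxle : x ≤ Nat.nth p (cx + d) := by
          rw [← hnx]
          exact (Nat.nth_le_nth hp).mpr (by omega)
        have h := step (cx + d) hxle
        have hρd : (0:ℝ) < ρ^d := by positivity
        calc ((x:ℝ)+1) < ρ^d * ((Nat.nth p (cx+d) : ℝ)+1) := ihd
          _ < ρ^d * (ρ * ((Nat.nth p (cx+d+1) : ℝ)+1)) := by
              apply mul_lt_mul_of_pos_left h hρd
          _ = ρ^(d+1) * ((Nat.nth p (cx+(d+1)) : ℝ)+1) := by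
              rw [show cx + (d+1) = cx + d + 1 from rfl]; ring
  have final := key (cy - cx) (by omega) (by omega)
  rw [show cx + (cy - cx) = cy from by omega, hny] at final
  have hpow : ρ^(cy - cx) ≤ ρ := by
    apply pow_le_of_le_one (le_of_lt hρpos) (le_of_lt hρlt)
    omega
  have heq : ρ * ((y:ℝ)+1) = (x:ℝ)+1 := by
    rw [hρ, div_mul_cancel₀]
    exact ne_of_gt hy1
  nlinarith [final, hpow, hy1]

lemma densityLem (p : ℕ → Prop) (hp : (setOf p).Infinite)
    (u : ℕ → ℕ) (hu : ∀ n, p (u n)) (humono : StrictMono u) (c : ℝ)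
    (htend : Filter.Tendsto (fun n => ((u n : ℝ)+1)/((u (n+1):ℝ)+1)) atTop (nhds c)) :
    c ≤ Filter.limsup
      (fun k => ((Nat.nth p k : ℝ)+1)/((Nat.nth p (k+1):ℝ)+1)) atTop := by
  set g := fun k => ((Nat.nth p k : ℝ)+1)/((Nat.nth p (k+1):ℝ)+1) with hg
  have hb : ∀ k, g k ≤ 1 := by
    intro k
    rw [hg]
    apply div_le_one_of_le₀
    · have h1 : Nat.nth p k < Nat.nth p (k+1) := (Nat.nth_lt_nth hp).mpr (lt_add_one k)
      have : (Nat.nth p k : ℝ) < (Nat.nth p (k+1) : ℝ) := by exact_mod_cast h1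
      linarith
    · positivity
  have hbdd : IsBoundedUnder (· ≤ ·) atTop g := isBoundedUnder_of ⟨1, hb⟩
  by_contra hlt
  push_neg at hlt
  set δ := (limsup g atTop + c)/2 with hδ
  have h2 : δ < c := by rw [hδ]; linarith
  have h1 : limsup g atTop < δ := by rw [hδ]; linarith
  have hev : ∀ᶠ n in atTop, δ < ((u n : ℝ)+1)/((u (n+1):ℝ)+1) :=
    htend.eventually (eventually_gt_nhds h2)
  obtain ⟨N, hN⟩ := eventually_atTop.mp hev
  have hfreq : ∃ᶠ k in atTop, δ ≤ g k := by
    rw [frequently_atTop]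
    intro K
    set n := max N (Nat.nth p K) with hn
    have hNn : N ≤ n := le_max_left _ _
    have hun : Nat.nth p K ≤ u n := le_trans (le_max_right _ _) (humono.le_apply)
    obtain ⟨k, hk1, hk2⟩ := chainLem p hp (u n) (u (n+1)) (hu n) (hu (n+1))
      (humono (lt_add_one n))
    refine ⟨k, ?_, le_trans (le_of_lt (hN n hNn)) hk2⟩
    exact (Nat.nth_le_nth hp).mp (le_trans hun hk1)
  have := le_limsup_of_frequently_le hfreq hbdd
  linarith

/-! ### Fibonacci ratio limit -/

lemma ratioAux (a b : ℝ) (ha : 1 < a) (hb : |b| < a)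
    (hfib : ∀ n : ℕ, (Nat.fib n : ℝ) = (a^n - b^n)/Real.sqrt 5) :
    Filter.Tendsto (fun n => ((Nat.fib (n+4) : ℝ) - 2)/((Nat.fib (n+5) : ℝ) - 2))
      atTop (nhds (1/a)) := by
  have hapos : 0 < a := by linarith
  have h5pos : (0:ℝ) < Real.sqrt 5 := Real.sqrt_pos.mpr (by norm_num)
  have h5ne : Real.sqrt 5 ≠ 0 := ne_of_gt h5pos
  have hq : |b / a| < 1 := by
    rw [abs_div, abs_of_pos hapos, div_lt_one hapos]
    exact hb
  have ht : |1 / a| < 1 := by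
    rw [abs_div, abs_of_pos hapos, div_lt_one hapos]
    simpa using ha
  have hqq : Filter.Tendsto (fun n : ℕ => (b/a)^(n+4)) atTop (nhds 0) :=
    (tendsto_pow_atTop_nhds_zero_of_abs_lt_one hq).comp (tendsto_add_atTop_nat 4)
  have htt : Filter.Tendsto (fun n : ℕ => (1/a)^(n+4)) atTop (nhds 0) :=
    (tendsto_pow_atTop_nhds_zero_of_abs_lt_one ht).comp (tendsto_add_atTop_nat 4)
  have hN : Filter.Tendsto (fun n : ℕ => 1 - (b/a)^(n+4) - 2*Real.sqrt 5*(1/a)^(n+4))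
      atTop (nhds 1) := by
    have := ((tendsto_const_nhds (x := (1:ℝ)) (f := atTop)).sub hqq).sub
      (htt.const_mul (2*Real.sqrt 5))
    simpa using this
  have hD : Filter.Tendsto (fun n : ℕ => a - b*(b/a)^(n+4) - 2*Real.sqrt 5*(1/a)^(n+4))
      atTop (nhds a) := by
    have := ((tendsto_const_nhds (x := a) (f := atTop)).sub (hqq.const_mul b)).sub
      (htt.const_mul (2*Real.sqrt 5))
    simpa using this
  have hlim := hN.div hD (by linarith)
  apply hlim.congr'
  filter_upwards [eventually_ge_atTop 0] with n _
  have hφn : (0:ℝ) < a^(n+4) := by positivity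
  have c1 : a^(n+4) * (b/a)^(n+4) = b^(n+4) := by
    rw [div_pow, mul_div_cancel₀]
    positivity
  have c2 : a^(n+4) * (1/a)^(n+4) = 1 := by
    rw [div_pow, one_pow, mul_div_cancel₀]
    positivity
  have keyN : a^(n+4) * (1 - (b/a)^(n+4) - 2*Real.sqrt 5*(1/a)^(n+4))
      = (a^(n+4) - b^(n+4)) - 2*Real.sqrt 5 := by
    linear_combination (-1 : ℝ)*c1 - (2*Real.sqrt 5)*c2
  have keyD : a^(n+4) * (a - b*(b/a)^(n+4) - 2*Real.sqrt 5*(1/a)^(n+4))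
      = (a^(n+5) - b^(n+5)) - 2*Real.sqrt 5 := by
    linear_combination (-b : ℝ)*c1 - (2*Real.sqrt 5)*c2
  have eN : (Nat.fib (n+4) : ℝ) - 2
      = (a^(n+4)/Real.sqrt 5) * (1 - (b/a)^(n+4) - 2*Real.sqrt 5*(1/a)^(n+4)) := by
    rw [hfib, div_mul_eq_mul_div, keyN]
    field_simp
  have eD : (Nat.fib (n+5) : ℝ) - 2
      = (a^(n+4)/Real.sqrt 5) * (a - b*(b/a)^(n+4) - 2*Real.sqrt 5*(1/a)^(n+4)) := by
    rw [hfib, div_mul_eq_mul_div, keyD]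
    field_simp
  rw [eN, eD]
  rw [mul_div_mul_left _ _ (by positivity : a^(n+4)/Real.sqrt 5 ≠ 0)]
  rfl

lemma fibRatioTendsto :
    Filter.Tendsto (fun n => ((Nat.fib (n+4) : ℝ) - 2)/((Nat.fib (n+5) : ℝ) - 2))
      atTop (nhds (2 / (1 + Real.sqrt 5))) := by
  have h5 : (2:ℝ) < Real.sqrt 5 := by
    have h4 : (2:ℝ) = Real.sqrt 4 := by
      rw [show (4:ℝ) = 2^2 by norm_num, Real.sqrt_sq (by norm_num)]
    rw [h4]
    exact Real.sqrt_lt_sqrt (by norm_num) (by norm_num)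
  have h1φ : (1:ℝ)/goldenRatio = 2/(1 + Real.sqrt 5) := by
    rw [goldenRatio, one_div_div]
  rw [← h1φ]
  apply ratioAux
  · exact one_lt_goldenRatio
  · rw [abs_of_neg goldenConj_neg]
    show -((1 - Real.sqrt 5)/2) < (1 + Real.sqrt 5)/2
    linarith
  · exact Real.coe_fib_eq

end FibMPal

open FibMPal

theorem fibonacci_m_palindromic_density
    (m r s : ℕ) (hm : 0 < m) (hr : 0 < r) (hs : 0 < s) (hrs : r ≠ s)
    (f : ℕ → Bool) (hf : ∀ n, (List.range (fibWord n).length).map f = fibWord n) :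
    {i : ℕ | IsMPal m (cfPrefix (fibCF f m r s) i)}.Infinite ∧
    2 / (1 + Real.sqrt 5) ≤
      Filter.limsup (fun k =>
        ((Nat.nth (fun i => IsMPal m (cfPrefix (fibCF f m r s) i)) k : ℝ) + 1) /
        ((Nat.nth (fun i => IsMPal m (cfPrefix (fibCF f m r s) i)) (k + 1) : ℝ) + 1))
        Filter.atTop := by
  set p : ℕ → Prop := fun i => IsMPal m (cfPrefix (fibCF f m r s) i) with hp
  set u : ℕ → ℕ := fun n => 2 * (palW n).length - 1 with hu
  -- lengths
  have hLpos : ∀ n : ℕ, 1 ≤ (palW n).length := by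
    intro n
    have h1 := palW_length n
    have h2 : 3 ≤ Nat.fib (n+4) := by
      have := Nat.fib_mono (show 4 ≤ n + 4 by omega)
      exact le_trans (by norm_num) this
    omega
  have hu1 : ∀ n : ℕ, u n + 1 = 2 * (palW n).length := by
    intro n
    have := hLpos n
    simp only [hu]
    omega
  -- each u n is an m-palindromic prefix index
  have hmem : ∀ n : ℕ, p (u n) := by
    intro n
    set L := (palW n).length with hL
    have hpref : cfPrefix (fibCF f m r s) (u n) = substW m r s (palW n) := by
      rw [cfPrefix, hu1 n]
      have hw : (List.range L).map f = palW n := by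
        apply prefix_map f (fibWord (n+2)) (palW n) (tW n)
        · exact hf (n+2)
        · exact fibWord_eq_pal n
      rw [range_map_fibCF, hw]
    rw [hp]
    show IsMPal m (cfPrefix (fibCF f m r s) (u n))
    rw [hpref]
    have hne : substW m r s (palW n) ≠ [] := by
      intro hcon
      have hsl := substW_length m r s (palW n)
      rw [hcon] at hsl
      have hlp := hLpos n
      have hz : (0:ℕ) = 2 * (palW n).length := hsl
      omega
    apply isMPal_of_entry m hm _ hne (substW_pos m r s hm hr hs _)
    have h := (twist m r s (palW n)).2.2.1
    rwa [palW_palindrome] at h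
  -- u is strictly monotone
  have humono : StrictMono u := by
    apply strictMono_nat_of_lt_succ
    intro n
    have h1 := palW_length n
    have h2 := palW_length (n+1)
    have h3 : Nat.fib (n+4) < Nat.fib (n+5) := Nat.fib_lt_fib_succ (by omega)
    have h4 : Nat.fib (n+1+4) = Nat.fib (n+5) := by norm_num
    have := hLpos n
    simp only [hu]
    omega
  have hpinf : (setOf p).Infinite := by
    apply Set.infinite_of_injective_forall_mem humono.injective
    intro n
    exact hmem n
  constructor
  · exact hpinf
  · have htend : Filter.Tendsto (fun n => ((u n : ℝ)+1)/((u (n+1):ℝ)+1)) Filter.atTop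
        (nhds (2 / (1 + Real.sqrt 5))) := by
      apply fibRatioTendsto.congr
      intro n
      have e1 : ((u n : ℝ) + 1) = 2 * ((Nat.fib (n+4) : ℝ) - 2) := by
        have h1 : (u n + 1 : ℕ) = 2 * (palW n).length := hu1 n
        have h2 := palW_length n
        have h3 : ((u n + 1 : ℕ) : ℝ) = ((2 * (palW n).length : ℕ) : ℝ) := by rw [h1]
        push_cast at h3
        have h4 : ((palW n).length : ℝ) = (Nat.fib (n+4) : ℝ) - 2 := by
          have : (((palW n).length + 2 : ℕ) : ℝ) = ((Nat.fib (n+4) : ℕ) : ℝ) := by rw [h2]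
          push_cast at this
          linarith
        rw [h3, h4]
      have e2 : ((u (n+1) : ℝ) + 1) = 2 * ((Nat.fib (n+5) : ℝ) - 2) := by
        have h1 : (u (n+1) + 1 : ℕ) = 2 * (palW (n+1)).length := hu1 (n+1)
        have h2 := palW_length (n+1)
        have h3 : ((u (n+1) + 1 : ℕ) : ℝ) = ((2 * (palW (n+1)).length : ℕ) : ℝ) := by rw [h1]
        push_cast at h3
        have h4 : ((palW (n+1)).length : ℝ) = (Nat.fib (n+5) : ℝ) - 2 := by
          have : (((palW (n+1)).length + 2 : ℕ) : ℝ) = ((Nat.fib (n+1+4) : ℕ) : ℝ) := by rw [h2]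
          push_cast at this
          have h5 : Nat.fib (n+1+4) = Nat.fib (n+5) := by norm_num
          rw [h5] at this
          linarith
        rw [h3, h4]
      rw [e1, e2, mul_div_mul_left _ _ (by norm_num : (2:ℝ) ≠ 0)]
    exact densityLem p hpinf u hmem humono _ htend
end
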